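/- For i ∈ I, α ∈ Φ, u ∈ R and t ∈ R^× one has h_i(t) x_α(u) h_i(t)^{−1} = x_α(u t^{(α, α_i^∨)}). Consequently U⁺ and U⁻ are normalised by H, so B^± := U^±·H are subgroups of G, and B⁺ ∩ B⁻ = H, B^± ∩ N = H. -/

import Mathlib

noncomputable section

open scoped BigOperators

/-- `pr B x y` is the pairing `(x, y^∨) = 2(x,y)/(y,y)`. -/
def pr {E : Type} [AddCommGroup E] [Module ℚ E] (B : E →ₗ[ℚ] E →ₗ[ℚ] ℚ) (x y : E) : ℚ :=
  2 * B x y / B y y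

/-- A reduced irreducible crystallographic root system `Φ` in a finite-dimensional ℚ-vector
space `E` equipped with a positive definite symmetric bilinear form, together with a system of
simple roots `α i` (`i ∈ I`). -/
structure RootSystemCtx (E I : Type) [AddCommGroup E] [Module ℚ E] [Fintype I] : Type where
  B : E →ₗ[ℚ] E →ₗ[ℚ] ℚ
  Bsymm : ∀ x y, B x y = B y x
  Bpos : ∀ x, x ≠ 0 → 0 < B x x
  findim : FiniteDimensional ℚ E
  Φ : Set E
  Φfin : Φ.Finite
  zero_nmem : (0 : E) ∉ Φ
  reduced : ∀ a ∈ Φ, ∀ b ∈ Φ, b ≠ a → b ≠ -a → LinearIndependent ℚ ![a, b]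
  crystal : ∀ a ∈ Φ, ∀ b ∈ Φ, ∃ n : ℤ, pr B b a = (n : ℚ)
  reflect_mem : ∀ a ∈ Φ, ∀ b ∈ Φ, b - pr B b a • a ∈ Φ
  α : I → E
  α_mem : ∀ i, α i ∈ Φ
  α_indep : LinearIndependent ℚ α
  α_span : Submodule.span ℚ (Set.range α) = ⊤
  pos_neg : ∀ b ∈ Φ, (∃ cf : I → ℤ, (∀ i, 0 ≤ cf i) ∧ b = ∑ i, (cf i : ℚ) • α i) ∨
      (∃ cf : I → ℤ, (∀ i, cf i ≤ 0) ∧ b = ∑ i, (cf i : ℚ) • α i)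
  irred : ¬ ∃ Φ₁ Φ₂ : Set E, Φ₁.Nonempty ∧ Φ₂.Nonempty ∧ Φ₁ ∪ Φ₂ = Φ ∧
      ∀ a ∈ Φ₁, ∀ b ∈ Φ₂, B a b = 0

namespace RootSystemCtx

variable {E I : Type} [AddCommGroup E] [Module ℚ E] [Fintype I] (c : RootSystemCtx E I)

/-- The linear functional `(·, a^∨)`. -/
def coform (a : E) : Module.Dual ℚ E := (2 * (c.B a a)⁻¹) • (c.B.flip a)

lemma coform_apply (a x : E) : c.coform a x = pr c.B x a := by
  simp only [coform, LinearMap.smul_apply, LinearMap.flip_apply, smul_eq_mul, pr,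
    div_eq_mul_inv]
  ring

lemma coform_self {a : E} (ha : a ∈ c.Φ) : c.coform a a = 2 := by
  have h0 : a ≠ 0 := fun h => c.zero_nmem (h ▸ ha)
  have hB : c.B a a ≠ 0 := ne_of_gt (c.Bpos a h0)
  rw [coform_apply, pr]
  field_simp

/-- The simple reflection `s i : v ↦ v - (v, αᵢ^∨) αᵢ`. -/
def s (i : I) : E ≃ₗ[ℚ] E := Module.reflection (c.coform_self (c.α_mem i))

lemma s_apply (i : I) (v : E) : c.s i v = v - pr c.B v (c.α i) • c.α i := by
  rw [s, Module.reflection_apply, coform_apply]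

/-- The Weyl group, as a subgroup of the group of linear automorphisms of `E`. -/
def Weyl : Subgroup (E ≃ₗ[ℚ] E) := Subgroup.closure (Set.range c.s)

/-- `lam` is a minuscule (dominant) weight: a nonzero dominant weight (integral pairing
with every simple coroot) with `(lam, a^∨) ∈ {0, ±1}` for every root `a`. -/
def IsMinuscule (lam : E) : Prop :=
  lam ≠ 0 ∧ (∀ i, ∃ n : ℤ, pr c.B lam (c.α i) = (n : ℚ)) ∧ (∀ i, 0 ≤ pr c.B lam (c.α i)) ∧
    ∀ a ∈ c.Φ, pr c.B lam a = 0 ∨ pr c.B lam a = 1 ∨ pr c.B lam a = -1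

/-- `b` is a positive root. -/
def IsPos (b : E) : Prop :=
  b ∈ c.Φ ∧ ∃ cf : I → ℚ, (∀ i, 0 ≤ cf i) ∧ b = ∑ i, cf i • c.α i

end RootSystemCtx

/-- A nonempty union `Ψ` of Weyl group orbits of minuscule weights. -/
structure PsiData {E I : Type} [AddCommGroup E] [Module ℚ E] [Fintype I]
    (c : RootSystemCtx E I) : Type where
  Ψ : Set E
  nonempty : Ψ.Nonempty
  finite : Ψ.Finite
  orbit : ∀ μ ∈ Ψ, ∃ lam, c.IsMinuscule lam ∧ ∃ w ∈ c.Weyl, w lam = μ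
  stab : ∀ μ ∈ Ψ, ∀ w ∈ c.Weyl, w μ ∈ Ψ

/-- `nOp e f i t tinv` is the operator `(1 + t eᵢ)(1 - t⁻¹ fᵢ)(1 + t eᵢ)`, where `tinv`
is the inverse of `t`. -/
def nOp {I K M' : Type} [CommRing K] [AddCommGroup M'] [Module K M']
    (e f : I → Module.End K M') (i : I) (t tinv : K) : Module.End K M' :=
  (1 + t • e i) * (1 - tinv • f i) * (1 + t • e i)

/-- `hOp e f i t` is the operator `hᵢ(t) = nᵢ(t) nᵢ(-1)` for a unit `t`. -/
def hOp {I K M' : Type} [CommRing K] [AddCommGroup M'] [Module K M']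
    (e f : I → Module.End K M') (i : I) (t : Kˣ) : Module.End K M' :=
  nOp e f i (t : K) ((t⁻¹ : Kˣ) : K) * nOp e f i ((-1 : Kˣ) : K) (((-1 : Kˣ)⁻¹ : Kˣ) : K)

/-- Conjugation `n_{i₁} ⋯ n_{i_k} x n_{i_k}⁻¹ ⋯ n_{i₁}⁻¹` for a list `l = [i₁, …, i_k]`. -/
def conjOp {I M' : Type} [AddCommGroup M'] [Module ℂ M'] (nu : I → (Module.End ℂ M')ˣ)
    (x : Module.End ℂ M') (l : List I) : Module.End ℂ M' :=
  ↑((l.map nu).prod) * x * ↑(((l.map nu).prod)⁻¹)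

attribute [local instance] LieRing.ofAssociativeRing

/-- The Lie subalgebra of `𝔤𝔩(M)` generated by the `eᵢ` and `fᵢ`. -/
def genLie {I M' : Type} [AddCommGroup M'] [Module ℂ M'] (e f : I → Module.End ℂ M') :
    LieSubalgebra ℂ (Module.End ℂ M') :=
  LieSubalgebra.lieSpan ℂ (Module.End ℂ M') (Set.range e ∪ Set.range f)

/-- The root space `𝔤_a = {x ∈ 𝔤 ∣ [hⱼ, x] = (a, αⱼ^∨) x for all j}`, as a set. -/
def rootSet {E I M' : Type} [AddCommGroup E] [Module ℚ E] [Fintype I]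
    [AddCommGroup M'] [Module ℂ M'] (c : RootSystemCtx E I)
    (e f h : I → Module.End ℂ M') (a : E) : Set (Module.End ℂ M') :=
  {x | x ∈ genLie e f ∧ ∀ j, ⁅h j, x⁆ = ((pr c.B a (c.α j) : ℚ) : ℂ) • x}

/-- The root space `𝔤_a`, as a submodule of `𝔤𝔩(M)`. -/
def rootSp {E I M' : Type} [AddCommGroup E] [Module ℚ E] [Fintype I]
    [AddCommGroup M'] [Module ℂ M'] (c : RootSystemCtx E I)
    (e f h : I → Module.End ℂ M') (a : E) : Submodule ℂ (Module.End ℂ M') :=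
  (genLie e f).toSubmodule ⊓ ⨅ j : I,
    Module.End.eigenspace
      (LinearMap.mulLeft ℂ (h j) - LinearMap.mulRight ℂ (h j) : Module.End ℂ (Module.End ℂ M'))
      ((pr c.B a (c.α j) : ℚ) : ℂ)

/-- The diagonal subgroup `H` generated by all `hᵢ(t)`, `t ∈ Kˣ`. -/
def Hgroup {I K M' : Type} [CommRing K] [AddCommGroup M'] [Module K M']
    (e f : I → Module.End K M') : Subgroup (Module.End K M')ˣ :=
  Subgroup.closure {g | ∃ (i : I) (t : Kˣ), (g : Module.End K M') = hOp e f i t}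

/-- The monomial subgroup `N` generated by all `nᵢ(t)`, `t ∈ Kˣ`. -/
def Ngroup {I K M' : Type} [CommRing K] [AddCommGroup M'] [Module K M']
    (e f : I → Module.End K M') : Subgroup (Module.End K M')ˣ :=
  Subgroup.closure {g | ∃ (i : I) (t : Kˣ),
    (g : Module.End K M') = nOp e f i (t : K) ((t⁻¹ : Kˣ) : K)}

/-- The subgroup `U⁺` generated by all `x_γ(t) = 1 + t ē_γ` with `γ ∈ Φ⁺`. -/
def Uplus {E I K M' : Type} [AddCommGroup E] [Module ℚ E] [Fintype I]
    [CommRing K] [AddCommGroup M'] [Module K M'] (c : RootSystemCtx E I)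
    (eb : E → Module.End K M') : Subgroup (Module.End K M')ˣ :=
  Subgroup.closure {g | ∃ γ, c.IsPos γ ∧ ∃ t : K, (g : Module.End K M') = 1 + t • eb γ}

/-- The subgroup `U⁻` generated by all `x_γ(t) = 1 + t ē_γ` with `γ ∈ Φ⁻`. -/
def Uminus {E I K M' : Type} [AddCommGroup E] [Module ℚ E] [Fintype I]
    [CommRing K] [AddCommGroup M'] [Module K M'] (c : RootSystemCtx E I)
    (eb : E → Module.End K M') : Subgroup (Module.End K M')ˣ :=
  Subgroup.closure {g | ∃ γ, c.IsPos (-γ) ∧ ∃ t : K, (g : Module.End K M') = 1 + t • eb γ}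

/-- The subgroup `Uᵢ⁺` generated by all `x_γ(t)` with `γ ∈ Φ⁺`, `γ ≠ αᵢ`. -/
def UplusI {E I K M' : Type} [AddCommGroup E] [Module ℚ E] [Fintype I]
    [CommRing K] [AddCommGroup M'] [Module K M'] (c : RootSystemCtx E I)
    (eb : E → Module.End K M') (i : I) : Subgroup (Module.End K M')ˣ :=
  Subgroup.closure {g | ∃ γ, c.IsPos γ ∧ γ ≠ c.α i ∧ ∃ t : K, (g : Module.End K M') = 1 + t • eb γ}

lemma LEmul_apply {E : Type} [AddCommGroup E] [Module ℚ E] (g g' : E ≃ₗ[ℚ] E) (v : E) :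
    (g * g') v = g (g' v) := rfl

lemma LEinv_apply {E : Type} [AddCommGroup E] [Module ℚ E] (g : E ≃ₗ[ℚ] E) (v : E) :
    g⁻¹ v = g.symm v := rfl

lemma LEone_apply {E : Type} [AddCommGroup E] [Module ℚ E] (v : E) :
    (1 : E ≃ₗ[ℚ] E) v = v := rfl

namespace RootSystemCtx

variable {E I : Type} [AddCommGroup E] [Module ℚ E] [Fintype I] (c : RootSystemCtx E I)

lemma pr_add_left (x y a : E) : pr c.B (x + y) a = pr c.B x a + pr c.B y a := by
  simp only [pr, map_add, LinearMap.add_apply]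
  ring

lemma α_ne_zero (i : I) : c.α i ≠ 0 := fun h => c.zero_nmem (h ▸ c.α_mem i)

lemma root_ne_zero {a : E} (ha : a ∈ c.Φ) : a ≠ 0 := fun h => c.zero_nmem (h ▸ ha)

lemma B_root_ne_zero {a : E} (ha : a ∈ c.Φ) : c.B a a ≠ 0 :=
  ne_of_gt (c.Bpos a (c.root_ne_zero ha))

lemma pr_root_self {a : E} (ha : a ∈ c.Φ) : pr c.B a a = 2 := by
  rw [← coform_apply, coform_self c ha]

lemma pr_simple_self (i : I) : pr c.B (c.α i) (c.α i) = 2 := c.pr_root_self (c.α_mem i)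

lemma s_isom (i : I) (x y : E) : c.B (c.s i x) (c.s i y) = c.B x y := by
  have hB : c.B (c.α i) (c.α i) ≠ 0 := c.B_root_ne_zero (c.α_mem i)
  rw [s_apply, s_apply]
  simp only [pr, map_sub, map_smul, LinearMap.sub_apply, LinearMap.smul_apply, smul_eq_mul]
  rw [c.Bsymm (c.α i) y]
  field_simp
  ring

lemma s_mem_weyl (i : I) : c.s i ∈ c.Weyl :=
  Subgroup.subset_closure ⟨i, rfl⟩

lemma s_inv (i : I) : (c.s i)⁻¹ = c.s i := by
  ext v
  rw [LEinv_apply, s, Module.reflection_symm]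

lemma s_s (i : I) (v : E) : c.s i (c.s i v) = v :=
  Module.involutive_reflection (c.coform_self (c.α_mem i)) v

lemma s_root_mem (i : I) {a : E} (ha : a ∈ c.Φ) : c.s i a ∈ c.Φ := by
  rw [s_apply]; exact c.reflect_mem (c.α i) (c.α_mem i) a ha

lemma weyl_isom {w : E ≃ₗ[ℚ] E} (hw : w ∈ c.Weyl) (x y : E) : c.B (w x) (w y) = c.B x y := by
  induction hw using Subgroup.closure_induction generalizing x y with
  | mem g hg => obtain ⟨i, rfl⟩ := hg; exact c.s_isom i x y
  | one => simp [LEone_apply]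
  | mul g g' hg hg' ihg ihg' => rw [LEmul_apply, LEmul_apply, ihg, ihg']
  | inv g hg ihg =>
      have h1 : ∀ v, g (g⁻¹ v) = v := fun v => LinearEquiv.apply_symm_apply g v
      rw [← ihg (g⁻¹ x) (g⁻¹ y), h1, h1]

lemma weyl_root_stab {w : E ≃ₗ[ℚ] E} (hw : w ∈ c.Weyl) :
    (∀ a ∈ c.Φ, w a ∈ c.Φ) ∧ (∀ a ∈ c.Φ, w⁻¹ a ∈ c.Φ) := by
  induction hw using Subgroup.closure_induction with
  | mem g hg =>
      obtain ⟨i, rfl⟩ := hg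
      exact ⟨fun a ha => c.s_root_mem i ha, fun a ha => by rw [s_inv]; exact c.s_root_mem i ha⟩
  | one => exact ⟨fun a ha => ha, fun a ha => by rw [inv_one]; exact ha⟩
  | mul g g' hg hg' ihg ihg' =>
      refine ⟨fun a ha => ?_, fun a ha => ?_⟩
      · rw [LEmul_apply]; exact ihg.1 _ (ihg'.1 a ha)
      · rw [mul_inv_rev, LEmul_apply]; exact ihg'.2 _ (ihg.2 a ha)
  | inv g hg ihg => exact ⟨fun a ha => ihg.2 a ha, fun a ha => by rw [inv_inv]; exact ihg.1 a ha⟩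

lemma weyl_pr {w : E ≃ₗ[ℚ] E} (hw : w ∈ c.Weyl) (x y : E) :
    pr c.B (w x) (w y) = pr c.B x y := by
  unfold pr
  rw [c.weyl_isom hw, c.weyl_isom hw]

lemma neg_root_mem {a : E} (ha : a ∈ c.Φ) : -a ∈ c.Φ := by
  have := c.reflect_mem a ha a ha
  rwa [c.pr_root_self ha, show a - (2:ℚ) • a = -a by module] at this

end RootSystemCtx

section PsiFacts

variable {E I : Type} [AddCommGroup E] [Module ℚ E] [Fintype I] {c : RootSystemCtx E I}
  (P : PsiData c)

lemma psi_pairing {μ : E} (hμ : μ ∈ P.Ψ) {a : E} (ha : a ∈ c.Φ) :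
    pr c.B μ a = 0 ∨ pr c.B μ a = 1 ∨ pr c.B μ a = -1 := by
  obtain ⟨lam, hmin, w, hw, rfl⟩ := P.orbit μ hμ
  have : pr c.B (w lam) a = pr c.B lam (w⁻¹ a) := by
    conv_lhs => rw [← LinearEquiv.apply_symm_apply w a]
    exact c.weyl_pr hw lam (w⁻¹ a)
  rw [this]
  exact hmin.2.2.2 _ ((c.weyl_root_stab hw).2 a ha)

lemma psi_add_mem {μ : E} (hμ : μ ∈ P.Ψ) (i : I) (h : pr c.B μ (c.α i) = -1) :
    μ + c.α i ∈ P.Ψ := by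
  have := P.stab μ hμ (c.s i) (c.s_mem_weyl i)
  rwa [c.s_apply, h, show μ - (-1 : ℚ) • c.α i = μ + c.α i by module] at this

lemma psi_sub_mem {μ : E} (hμ : μ ∈ P.Ψ) (i : I) (h : pr c.B μ (c.α i) = 1) :
    μ - c.α i ∈ P.Ψ := by
  have := P.stab μ hμ (c.s i) (c.s_mem_weyl i)
  rwa [c.s_apply, h, one_smul] at this

end PsiFacts

section Action

variable {E I : Type} [AddCommGroup E] [Module ℚ E] [Fintype I] {c : RootSystemCtx E I}
  {P : PsiData c} {K : Type} [CommRing K] {MK : Type} [AddCommGroup MK] [Module K MK]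

/-- Bundled hypotheses about the action of `e i`, `f i` on the weight basis. -/
structure IsChevAction (P : PsiData c) (zz : Module.Basis P.Ψ K MK) (ee ff : I → Module.End K MK) :
    Prop where
  e1 : ∀ (i : I) (μ : P.Ψ) (hm : (μ : E) + c.α i ∈ P.Ψ),
      pr c.B (μ : E) (c.α i) = -1 → ee i (zz μ) = zz ⟨(μ : E) + c.α i, hm⟩
  e0 : ∀ (i : I) (μ : P.Ψ), pr c.B (μ : E) (c.α i) ≠ -1 → ee i (zz μ) = 0
  f1 : ∀ (i : I) (μ : P.Ψ) (hm : (μ : E) - c.α i ∈ P.Ψ),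
      pr c.B (μ : E) (c.α i) = 1 → ff i (zz μ) = zz ⟨(μ : E) - c.α i, hm⟩
  f0 : ∀ (i : I) (μ : P.Ψ), pr c.B (μ : E) (c.α i) ≠ 1 → ff i (zz μ) = 0

variable {zz : Module.Basis P.Ψ K MK} {ee ff : I → Module.End K MK}

lemma pr_add_simple (i : I) (μ : E) :
    pr c.B (μ + c.α i) (c.α i) = pr c.B μ (c.α i) + 2 := by
  rw [c.pr_add_left, c.pr_simple_self]

lemma pr_sub_simple (i : I) (μ : E) :
    pr c.B (μ - c.α i) (c.α i) = pr c.B μ (c.α i) - 2 := by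
  have := c.pr_add_left (μ - c.α i) (c.α i) (c.α i)
  rw [sub_add_cancel, c.pr_simple_self] at this
  linarith

lemma nOp_apply_zero (h : IsChevAction P zz ee ff) (i : I) (t tinv : K) (μ : P.Ψ)
    (hp1 : pr c.B (μ : E) (c.α i) ≠ 1) (hpm : pr c.B (μ : E) (c.α i) ≠ -1) :
    nOp ee ff i t tinv (zz μ) = zz μ := by
  have he := h.e0 i μ hpm
  have hf := h.f0 i μ hp1
  simp [nOp, Module.End.mul_apply, LinearMap.add_apply, LinearMap.sub_apply,
    LinearMap.smul_apply, Module.End.one_apply, he, hf]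

lemma nOp_apply_neg (h : IsChevAction P zz ee ff) (i : I) (t tinv : K) (hti : t * tinv = 1)
    (μ : P.Ψ) (hp : pr c.B (μ : E) (c.α i) = -1) :
    nOp ee ff i t tinv (zz μ) =
      t • zz ⟨(μ : E) + c.α i, psi_add_mem P μ.2 i hp⟩ := by
  set ν : P.Ψ := ⟨(μ : E) + c.α i, psi_add_mem P μ.2 i hp⟩ with hν
  have hpν : pr c.B (ν : E) (c.α i) = 1 := by
    show pr c.B ((μ : E) + c.α i) (c.α i) = 1
    rw [pr_add_simple, hp]; norm_num
  have he : ee i (zz μ) = zz ν := h.e1 i μ _ hp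
  have hfμ : ff i (zz μ) = 0 := h.f0 i μ (by rw [hp]; norm_num)
  have hmν : (ν : E) - c.α i ∈ P.Ψ := by
    show (μ : E) + c.α i - c.α i ∈ P.Ψ
    rw [add_sub_cancel_right]; exact μ.2
  have hfν : ff i (zz ν) = zz μ := by
    rw [h.f1 i ν hmν hpν]
    congr 1
    exact Subtype.ext (add_sub_cancel_right _ _)
  have heν : ee i (zz ν) = 0 := h.e0 i ν (by rw [hpν]; norm_num)
  simp only [nOp, Module.End.mul_apply, LinearMap.add_apply, LinearMap.sub_apply,
    LinearMap.smul_apply, Module.End.one_apply, he, hfμ, hfν, heν, map_add, map_smul,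
    map_sub, smul_zero, map_zero]
  match_scalars
  all_goals
    first
    | linear_combination -hti
    | linear_combination -t * hti
    | linear_combination -tinv * hti
    | ring

lemma nOp_apply_pos (h : IsChevAction P zz ee ff) (i : I) (t tinv : K) (hti : t * tinv = 1)
    (μ : P.Ψ) (hp : pr c.B (μ : E) (c.α i) = 1) :
    nOp ee ff i t tinv (zz μ) =
      (-tinv) • zz ⟨(μ : E) - c.α i, psi_sub_mem P μ.2 i hp⟩ := by
  set ν : P.Ψ := ⟨(μ : E) - c.α i, psi_sub_mem P μ.2 i hp⟩ with hν
  have hpν : pr c.B (ν : E) (c.α i) = -1 := by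
    show pr c.B ((μ : E) - c.α i) (c.α i) = -1
    rw [pr_sub_simple, hp]; norm_num
  have hf : ff i (zz μ) = zz ν := h.f1 i μ _ hp
  have heμ : ee i (zz μ) = 0 := h.e0 i μ (by rw [hp]; norm_num)
  have hmν : (ν : E) + c.α i ∈ P.Ψ := by
    show (μ : E) - c.α i + c.α i ∈ P.Ψ
    rw [sub_add_cancel]; exact μ.2
  have heν : ee i (zz ν) = zz μ := by
    rw [h.e1 i ν hmν hpν]
    congr 1
    exact Subtype.ext (sub_add_cancel _ _)
  simp only [nOp, Module.End.mul_apply, LinearMap.add_apply, LinearMap.sub_apply,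
    LinearMap.smul_apply, Module.End.one_apply, hf, heμ, heν, map_add, map_smul,
    map_sub, smul_zero, map_zero, add_zero, zero_add]
  match_scalars
  all_goals
    first
    | linear_combination -hti
    | linear_combination -t * hti
    | linear_combination -tinv * hti
    | ring

lemma neg_one_inv_val {K : Type} [CommRing K] : (((-1 : Kˣ)⁻¹ : Kˣ) : K) = -1 := by
  have h : (-1 : Kˣ)⁻¹ = -1 := by
    apply inv_eq_of_mul_eq_one_right
    simp
  rw [h]
  simp

lemma hOp_apply (h : IsChevAction P zz ee ff) (i : I) (t : Kˣ) (μ : P.Ψ)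
    (htri : pr c.B (μ : E) (c.α i) = 0 ∨ pr c.B (μ : E) (c.α i) = 1 ∨
      pr c.B (μ : E) (c.α i) = -1) :
    hOp ee ff i t (zz μ) = ((t ^ (pr c.B (μ : E) (c.α i)).num : Kˣ) : K) • zz μ := by
  have hti : (t : K) * ((t⁻¹ : Kˣ) : K) = 1 := by
    rw [← Units.val_mul, mul_inv_cancel, Units.val_one]
  have hm1 : ((-1 : Kˣ) : K) = -1 := by simp
  have hm1i : (((-1 : Kˣ)⁻¹ : Kˣ) : K) = -1 := neg_one_inv_val
  have hmti : ((-1 : Kˣ) : K) * (((-1 : Kˣ)⁻¹ : Kˣ) : K) = 1 := by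
    rw [hm1, hm1i]; ring
  rw [hOp, Module.End.mul_apply]
  rcases htri with hp | hp | hp
  · rw [nOp_apply_zero h i _ _ μ (by rw [hp]; norm_num) (by rw [hp]; norm_num),
      nOp_apply_zero h i _ _ μ (by rw [hp]; norm_num) (by rw [hp]; norm_num), hp]
    norm_num
  · -- p = 1 : n(-1) sends to μ-α with sign -(-1)=1 ; then n(t) gives t
    rw [nOp_apply_pos h i _ _ hmti μ hp, hm1i]
    set ν : P.Ψ := ⟨(μ : E) - c.α i, psi_sub_mem P μ.2 i hp⟩ with hν
    have hpν : pr c.B (ν : E) (c.α i) = -1 := by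
      show pr c.B ((μ : E) - c.α i) (c.α i) = -1
      rw [pr_sub_simple, hp]; norm_num
    rw [map_smul, nOp_apply_neg h i _ _ hti ν hpν]
    have : (⟨(ν : E) + c.α i, psi_add_mem P ν.2 i hpν⟩ : P.Ψ) = μ :=
      Subtype.ext (sub_add_cancel _ _)
    rw [this, hp]
    norm_num [smul_smul]
  · rw [nOp_apply_neg h i _ _ hmti μ hp, hm1]
    set ν : P.Ψ := ⟨(μ : E) + c.α i, psi_add_mem P μ.2 i hp⟩ with hν
    have hpν : pr c.B (ν : E) (c.α i) = 1 := by
      show pr c.B ((μ : E) + c.α i) (c.α i) = 1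
      rw [pr_add_simple, hp]; norm_num
    rw [map_smul, nOp_apply_pos h i _ _ hti ν hpν]
    have : (⟨(ν : E) - c.α i, psi_sub_mem P ν.2 i hpν⟩ : P.Ψ) = μ :=
      Subtype.ext (add_sub_cancel_right _ _)
    rw [this, hp]
    have : ((-1 : ℚ)).num = -1 := rfl
    rw [this, zpow_neg_one]
    rw [smul_smul]
    congr 1
    push_cast
    ring

end Action

section LineSec

variable {E I : Type} [AddCommGroup E] [Module ℚ E] [Fintype I] {c : RootSystemCtx E I}
  {P : PsiData c} {K : Type} [CommRing K] {MK : Type} [AddCommGroup MK] [Module K MK]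
  {zz : Module.Basis P.Ψ K MK} {ee ff : I → Module.End K MK}

lemma nOp_mul_inv (h : IsChevAction P zz ee ff) (i : I) (t tinv : K) (hti : t * tinv = 1) :
    nOp ee ff i t tinv * nOp ee ff i (-t) (-tinv) = 1 := by
  have hti' : (-t) * (-tinv) = 1 := by linear_combination hti
  apply Module.Basis.ext zz
  intro μ
  rw [Module.End.mul_apply, Module.End.one_apply]
  rcases psi_pairing P μ.2 (c.α_mem i) with hp | hp | hp
  · rw [nOp_apply_zero h i _ _ μ (by rw [hp]; norm_num) (by rw [hp]; norm_num),
      nOp_apply_zero h i _ _ μ (by rw [hp]; norm_num) (by rw [hp]; norm_num)]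
  · rw [nOp_apply_pos h i _ _ hti' μ hp]
    set ν : P.Ψ := ⟨(μ : E) - c.α i, psi_sub_mem P μ.2 i hp⟩ with hν
    have hpν : pr c.B (ν : E) (c.α i) = -1 := by
      show pr c.B ((μ : E) - c.α i) (c.α i) = -1
      rw [pr_sub_simple, hp]; norm_num
    rw [map_smul, nOp_apply_neg h i _ _ hti ν hpν]
    have hEq : (⟨(ν : E) + c.α i, psi_add_mem P ν.2 i hpν⟩ : P.Ψ) = μ :=
      Subtype.ext (sub_add_cancel _ _)
    rw [hEq, smul_smul]
    rw [show -(-tinv) * t = t * tinv by ring, hti, one_smul]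
  · rw [nOp_apply_neg h i _ _ hti' μ hp]
    set ν : P.Ψ := ⟨(μ : E) + c.α i, psi_add_mem P μ.2 i hp⟩ with hν
    have hpν : pr c.B (ν : E) (c.α i) = 1 := by
      show pr c.B ((μ : E) + c.α i) (c.α i) = 1
      rw [pr_add_simple, hp]; norm_num
    rw [map_smul, nOp_apply_pos h i _ _ hti ν hpν]
    have hEq : (⟨(ν : E) - c.α i, psi_sub_mem P ν.2 i hpν⟩ : P.Ψ) = μ :=
      Subtype.ext (add_sub_cancel_right _ _)
    rw [hEq, smul_smul]
    rw [show -t * -tinv = t * tinv by ring, hti, one_smul]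

/-- Index of `s i μ` in `Ψ`. -/
def sIdx (P : PsiData c) (i : I) (μ : P.Ψ) : P.Ψ :=
  ⟨c.s i (μ : E), P.stab _ μ.2 _ (c.s_mem_weyl i)⟩

lemma nOp_one_line (h : IsChevAction P zz ee ff) (i : I) (μ : P.Ψ) :
    ∃ ε : Kˣ, nOp ee ff i 1 1 (zz μ) = (ε : K) • zz (sIdx P i μ) := by
  rcases psi_pairing P μ.2 (c.α_mem i) with hp | hp | hp
  · refine ⟨1, ?_⟩
    rw [nOp_apply_zero h i _ _ μ (by rw [hp]; norm_num) (by rw [hp]; norm_num)]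
    have : sIdx P i μ = μ := Subtype.ext (by show c.s i (μ : E) = (μ : E); rw [c.s_apply, hp]; module)
    rw [this, Units.val_one, one_smul]
  · refine ⟨-1, ?_⟩
    rw [nOp_apply_pos h i _ _ (by norm_num) μ hp]
    have : sIdx P i μ = ⟨(μ : E) - c.α i, psi_sub_mem P μ.2 i hp⟩ :=
      Subtype.ext (by show c.s i (μ : E) = (μ : E) - c.α i; rw [c.s_apply, hp]; module)
    rw [this]
    norm_num
  · refine ⟨1, ?_⟩
    rw [nOp_apply_neg h i _ _ (by norm_num) μ hp]
    have : sIdx P i μ = ⟨(μ : E) + c.α i, psi_add_mem P μ.2 i hp⟩ :=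
      Subtype.ext (by show c.s i (μ : E) = (μ : E) + c.α i; rw [c.s_apply, hp]; module)
    rw [this]
    norm_num

lemma nOp_neg_one_line (h : IsChevAction P zz ee ff) (i : I) (μ : P.Ψ) :
    ∃ ε : Kˣ, nOp ee ff i (-1) (-1) (zz μ) = (ε : K) • zz (sIdx P i μ) := by
  rcases psi_pairing P μ.2 (c.α_mem i) with hp | hp | hp
  · refine ⟨1, ?_⟩
    rw [nOp_apply_zero h i _ _ μ (by rw [hp]; norm_num) (by rw [hp]; norm_num)]
    have : sIdx P i μ = μ := Subtype.ext (by show c.s i (μ : E) = (μ : E); rw [c.s_apply, hp]; module)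
    rw [this, Units.val_one, one_smul]
  · refine ⟨1, ?_⟩
    rw [nOp_apply_pos h i _ _ (by norm_num) μ hp]
    have : sIdx P i μ = ⟨(μ : E) - c.α i, psi_sub_mem P μ.2 i hp⟩ :=
      Subtype.ext (by show c.s i (μ : E) = (μ : E) - c.α i; rw [c.s_apply, hp]; module)
    rw [this]
    norm_num
  · refine ⟨-1, ?_⟩
    rw [nOp_apply_neg h i _ _ (by norm_num) μ hp]
    have : sIdx P i μ = ⟨(μ : E) + c.α i, psi_add_mem P μ.2 i hp⟩ :=
      Subtype.ext (by show c.s i (μ : E) = (μ : E) + c.α i; rw [c.s_apply, hp]; module)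
    rw [this]
    norm_num

end LineSec

section ConjSec

variable {E I : Type} [AddCommGroup E] [Module ℚ E] [Fintype I] {c : RootSystemCtx E I}
  {P : PsiData c} {M : Type} [AddCommGroup M] [Module ℂ M]
  {z : Module.Basis P.Ψ ℂ M} {e f : I → Module.End ℂ M}

/-- `x` maps each weight line `μ` into the weight line `μ + β`. -/
def LineProp (z : Module.Basis P.Ψ ℂ M) (x : Module.End ℂ M) (β : E) : Prop :=
  ∀ μ : P.Ψ, x (z μ) = 0 ∨
    ∃ (hm : (μ : E) + β ∈ P.Ψ) (cc : ℂ), x (z μ) = cc • z ⟨(μ : E) + β, hm⟩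

lemma nu_inv_coe (h : IsChevAction P z e f) (nu : I → (Module.End ℂ M)ˣ)
    (hnu : ∀ i, (nu i : Module.End ℂ M) = nOp e f i 1 1) (i : I) :
    (((nu i)⁻¹ : (Module.End ℂ M)ˣ) : Module.End ℂ M) = nOp e f i (-1) (-1) := by
  have h1 : (nu i : Module.End ℂ M) * nOp e f i (-1) (-1) = 1 := by
    rw [hnu]
    have := nOp_mul_inv h i 1 1 (by norm_num)
    simpa using this
  calc (((nu i)⁻¹ : (Module.End ℂ M)ˣ) : Module.End ℂ M)
      = ↑(nu i)⁻¹ * ((nu i : Module.End ℂ M) * nOp e f i (-1) (-1)) := by rw [h1, mul_one]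
    _ = (↑(nu i)⁻¹ * (nu i : Module.End ℂ M)) * nOp e f i (-1) (-1) := by rw [mul_assoc]
    _ = nOp e f i (-1) (-1) := by rw [Units.inv_mul, one_mul]

lemma lineProp_conj (h : IsChevAction P z e f) (nu : I → (Module.End ℂ M)ˣ)
    (hnu : ∀ i, (nu i : Module.End ℂ M) = nOp e f i 1 1) (i : I)
    {x : Module.End ℂ M} {β : E} (hl : LineProp z x β) :
    LineProp z (↑(nu i) * x * ↑(nu i)⁻¹) (c.s i β) := by
  intro μ
  obtain ⟨ε₁, hε₁⟩ : ∃ ε : ℂˣ,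
      (((nu i)⁻¹ : (Module.End ℂ M)ˣ) : Module.End ℂ M) (z μ) = (ε : ℂ) • z (sIdx P i μ) := by
    rw [nu_inv_coe h nu hnu]
    exact nOp_neg_one_line h i μ
  rw [Module.End.mul_apply, Module.End.mul_apply, hε₁, map_smul, map_smul]
  rcases hl (sIdx P i μ) with h0 | ⟨hm, cc, hcc⟩
  · left; rw [h0, map_zero, smul_zero]
  · rw [hcc, map_smul]
    obtain ⟨ε₂, hε₂⟩ : ∃ ε : ℂˣ, (nu i : Module.End ℂ M) (z ⟨(sIdx P i μ : E) + β, hm⟩) =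
        (ε : ℂ) • z (sIdx P i ⟨(sIdx P i μ : E) + β, hm⟩) := by
      rw [hnu]
      exact nOp_one_line h i _
    rw [hε₂]
    right
    have hidx : (sIdx P i ⟨(sIdx P i μ : E) + β, hm⟩ : E) = (μ : E) + c.s i β := by
      show c.s i (c.s i (μ : E) + β) = (μ : E) + c.s i β
      rw [map_add, c.s_s]
    have hmem : (μ : E) + c.s i β ∈ P.Ψ := by
      rw [← hidx]; exact (sIdx P i ⟨(sIdx P i μ : E) + β, hm⟩).2
    refine ⟨hmem, (ε₁ : ℂ) * (cc * (ε₂ : ℂ)), ?_⟩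
    have hidx2 : sIdx P i ⟨(sIdx P i μ : E) + β, hm⟩ = (⟨(μ : E) + c.s i β, hmem⟩ : P.Ψ) :=
      Subtype.ext hidx
    rw [smul_smul, smul_smul, hidx2, mul_assoc]

lemma lineProp_conjOp (h : IsChevAction P z e f) (nu : I → (Module.End ℂ M)ˣ)
    (hnu : ∀ i, (nu i : Module.End ℂ M) = nOp e f i 1 1) (l : List I)
    {x : Module.End ℂ M} {β : E} (hl : LineProp z x β) :
    LineProp z (conjOp nu x l) (((l.map c.s).prod) β) := by
  induction l generalizing x β with
  | nil =>
      simpa [conjOp, LEone_apply] using hl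
  | cons i l ih =>
      have hstep : conjOp nu x (i :: l) = ↑(nu i) * conjOp nu x l * ↑(nu i)⁻¹ := by
        simp only [conjOp, List.map_cons, List.prod_cons, mul_inv_rev, Units.val_mul]
        simp only [mul_assoc]
      rw [hstep]
      have := lineProp_conj h nu hnu i (ih hl)
      have hw : ((List.map c.s (i :: l)).prod) β = c.s i (((List.map c.s l).prod) β) := by
        rw [List.map_cons, List.prod_cons, LEmul_apply]
      rw [hw]
      exact this

lemma lineProp_e (h : IsChevAction P z e f) (i : I) : LineProp z (e i) (c.α i) := by
  intro μ
  rcases psi_pairing P μ.2 (c.α_mem i) with hp | hp | hp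
  · left; exact h.e0 i μ (by rw [hp]; norm_num)
  · left; exact h.e0 i μ (by rw [hp]; norm_num)
  · right
    exact ⟨psi_add_mem P μ.2 i hp, 1, by rw [h.e1 i μ _ hp, one_smul]⟩

lemma lineProp_eRoot (h : IsChevAction P z e f) (nu : I → (Module.End ℂ M)ˣ)
    (hnu : ∀ i, (nu i : Module.End ℂ M) = nOp e f i 1 1)
    (eRoot : E → Module.End ℂ M)
    (heRoot : ∀ γ ∈ c.Φ, ∃ (i : I) (l : List I),
      ((l.map c.s).prod) (c.α i) = γ ∧ eRoot γ = conjOp nu (e i) l)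
    {γ : E} (hγ : γ ∈ c.Φ) : LineProp z (eRoot γ) γ := by
  obtain ⟨i, l, hwα, hconj⟩ := heRoot γ hγ
  rw [hconj, ← hwα]
  exact lineProp_conjOp h nu hnu l (lineProp_e h i)

end ConjSec

section Transfer

variable {E I : Type} [AddCommGroup E] [Module ℚ E] [Fintype I] {c : RootSystemCtx E I}
  {P : PsiData c} {M : Type} [AddCommGroup M] [Module ℂ M]
  {R : Type} [CommRing R] {Mb : Type} [AddCommGroup Mb] [Module R Mb]

/-- Weight-line property for `eb γ` over `R`, transferred from `ℂ` via `hlink`. -/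
lemma eb_line (z : Module.Basis P.Ψ ℂ M) (eRoot : E → Module.End ℂ M)
    (zb : Module.Basis P.Ψ R Mb) (eb : E → Module.End R Mb)
    (hlink : ∀ γ ∈ c.Φ, ∀ μ ν : P.Ψ, ∃ k : ℤ,
      z.repr (eRoot γ (z μ)) ν = (k : ℂ) ∧ zb.repr (eb γ (zb μ)) ν = (k : R))
    {γ : E} (hγ : γ ∈ c.Φ) (hline : LineProp z (eRoot γ) γ) (μ : P.Ψ) :
    eb γ (zb μ) = 0 ∨
      ∃ (hm : (μ : E) + γ ∈ P.Ψ) (co : R), eb γ (zb μ) = co • zb ⟨(μ : E) + γ, hm⟩ := by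
  by_cases hm : (μ : E) + γ ∈ P.Ψ
  · right
    refine ⟨hm, zb.repr (eb γ (zb μ)) ⟨(μ : E) + γ, hm⟩, ?_⟩
    apply zb.ext_elem
    intro ν
    by_cases hν : ν = ⟨(μ : E) + γ, hm⟩
    · subst hν
      rw [map_smul, zb.repr_self, Finsupp.smul_single, smul_eq_mul, mul_one,
        Finsupp.single_eq_same]
    · obtain ⟨k, hkC, hkR⟩ := hlink γ hγ μ ν
      have hC0 : z.repr (eRoot γ (z μ)) ν = 0 := by
        rcases hline μ with h0 | ⟨hm', cc, hcc⟩
        · rw [h0, map_zero, Finsupp.coe_zero, Pi.zero_apply]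
        · have : (⟨(μ : E) + γ, hm'⟩ : P.Ψ) = ⟨(μ : E) + γ, hm⟩ := Subtype.ext rfl
          rw [hcc, this, map_smul, z.repr_self, Finsupp.smul_single, smul_eq_mul, mul_one,
            Finsupp.single_apply_eq_zero.2 (fun h => absurd h.symm (by exact fun hh => hν hh.symm))]
      have hk0 : k = 0 := by
        have := hkC.symm.trans hC0
        exact_mod_cast this
      rw [hkR, hk0, map_smul, zb.repr_self, Finsupp.smul_single, smul_eq_mul, mul_one,
        Finsupp.single_apply_eq_zero.2 (fun h => absurd h.symm (fun hh => hν hh.symm))]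
      simp
  · left
    apply zb.ext_elem
    intro ν
    obtain ⟨k, hkC, hkR⟩ := hlink γ hγ μ ν
    have hC0 : z.repr (eRoot γ (z μ)) ν = 0 := by
      rcases hline μ with h0 | ⟨hm', cc, hcc⟩
      · rw [h0, map_zero, Finsupp.coe_zero, Pi.zero_apply]
      · exact absurd hm' hm
    have hk0 : k = 0 := by
      have := hkC.symm.trans hC0
      exact_mod_cast this
    rw [hkR, hk0]
    simp

end Transfer

lemma qnum_add_int {p : ℚ} (k : ℤ) (hp : p = 0 ∨ p = 1 ∨ p = -1) :
    (p + (k : ℚ)).num = p.num + k := by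
  rcases hp with h | h | h <;> subst h
  · rw [show (0 : ℚ) + (k : ℚ) = ((0 + k : ℤ) : ℚ) by push_cast; ring, Rat.num_intCast]
    norm_num
  · rw [show (1 : ℚ) + (k : ℚ) = ((1 + k : ℤ) : ℚ) by push_cast; ring, Rat.num_intCast]
    norm_num
  · rw [show (-1 : ℚ) + (k : ℚ) = ((-1 + k : ℤ) : ℚ) by push_cast; ring, Rat.num_intCast]
    norm_num

section ConjR

variable {E I : Type} [AddCommGroup E] [Module ℚ E] [Fintype I] {c : RootSystemCtx E I}
  {P : PsiData c} {R : Type} [CommRing R] {Mb : Type} [AddCommGroup Mb] [Module R Mb]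
  {zb : Module.Basis P.Ψ R Mb} {ebS fbS : I → Module.End R Mb}

/-- The operator-level conjugation relation `hᵢ(t) x_γ(u) = x_γ(u t^k) hᵢ(t)`. -/
lemma hOp_conj_end (h : IsChevAction P zb ebS fbS) (eb : E → Module.End R Mb)
    (hline : ∀ γ ∈ c.Φ, ∀ μ : P.Ψ, eb γ (zb μ) = 0 ∨
      ∃ (hm : (μ : E) + γ ∈ P.Ψ) (co : R), eb γ (zb μ) = co • zb ⟨(μ : E) + γ, hm⟩)
    {γ : E} (hγ : γ ∈ c.Φ) (i : I) (t : Rˣ) (u : R) (k : ℤ)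
    (hk : (k : ℚ) = pr c.B γ (c.α i)) :
    hOp ebS fbS i t * (1 + u • eb γ) =
      (1 + (u * ((t ^ k : Rˣ) : R)) • eb γ) * hOp ebS fbS i t := by
  apply Module.Basis.ext zb
  intro μ
  have htri := psi_pairing P μ.2 (c.α_mem i)
  have hτμ := hOp_apply h i t μ htri
  rw [Module.End.mul_apply, Module.End.mul_apply, hτμ, map_smul]
  simp only [LinearMap.add_apply, Module.End.one_apply, LinearMap.smul_apply]
  rw [map_add, map_smul, hτμ]
  rcases hline γ hγ μ with h0 | ⟨hm, co, hco⟩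
  · rw [h0]
    simp
  · set ν : P.Ψ := ⟨(μ : E) + γ, hm⟩ with hν
    have htriν := psi_pairing P ν.2 (c.α_mem i)
    have hτν := hOp_apply h i t ν htriν
    have hpν : pr c.B (ν : E) (c.α i) = pr c.B (μ : E) (c.α i) + (k : ℚ) := by
      show pr c.B ((μ : E) + γ) (c.α i) = _
      rw [c.pr_add_left, hk]
    have hnum : (pr c.B (ν : E) (c.α i)).num = (pr c.B (μ : E) (c.α i)).num + k := by
      rw [hpν]
      exact qnum_add_int k htri
    have hrel : ((t ^ (pr c.B (ν : E) (c.α i)).num : Rˣ) : R) =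
        ((t ^ (pr c.B (μ : E) (c.α i)).num : Rˣ) : R) * ((t ^ k : Rˣ) : R) := by
      rw [← Units.val_mul, ← zpow_add, ← hnum]
    rw [hco, map_smul, hτν, hrel]
    match_scalars <;> ring

lemma hOp_mul_hOp_inv (h : IsChevAction P zb ebS fbS) (i : I) (t : Rˣ) :
    hOp ebS fbS i t * hOp ebS fbS i t⁻¹ = 1 := by
  apply Module.Basis.ext zb
  intro μ
  have htri := psi_pairing P μ.2 (c.α_mem i)
  rw [Module.End.mul_apply, hOp_apply h i t⁻¹ μ htri, map_smul, hOp_apply h i t μ htri,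
    Module.End.one_apply, smul_smul, ← Units.val_mul, ← mul_zpow, inv_mul_cancel, one_zpow,
    Units.val_one, one_smul]

end ConjR

section GroupGeneric

variable {G : Type} [Group G]

lemma conj_closure_le (S : Set G) (g : G)
    (hg : ∀ v ∈ S, g * v * g⁻¹ ∈ Subgroup.closure S) :
    ∀ v ∈ Subgroup.closure S, g * v * g⁻¹ ∈ Subgroup.closure S := by
  intro v hv
  have hle : Subgroup.closure S ≤ (Subgroup.closure S).comap (MulAut.conj g).toMonoidHom := by
    rw [Subgroup.closure_le]
    intro s hs
    rw [SetLike.mem_coe, Subgroup.mem_comap]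
    show ((MulAut.conj g).toMonoidHom s) ∈ Subgroup.closure S
    simpa [MulAut.conj_apply] using hg s hs
  have := hle hv
  rw [Subgroup.mem_comap] at this
  simpa [MulAut.conj_apply] using this

lemma join_decomp (U H : Subgroup G)
    (hnorm : ∀ g ∈ H, ∀ v ∈ U, g * v * g⁻¹ ∈ U) :
    ∀ g ∈ U ⊔ H, ∃ v ∈ U, ∃ x ∈ H, g = v * x := by
  let K : Subgroup G :=
    { carrier := {g | ∃ v ∈ U, ∃ x ∈ H, g = v * x}
      one_mem' := ⟨1, one_mem U, 1, one_mem H, (one_mul 1).symm⟩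
      mul_mem' := by
        rintro a b ⟨v₁, hv₁, x₁, hx₁, rfl⟩ ⟨v₂, hv₂, x₂, hx₂, rfl⟩
        refine ⟨v₁ * (x₁ * v₂ * x₁⁻¹), mul_mem hv₁ (hnorm x₁ hx₁ v₂ hv₂),
          x₁ * x₂, mul_mem hx₁ hx₂, ?_⟩
        group
      inv_mem' := by
        rintro a ⟨v, hv, x, hx, rfl⟩
        refine ⟨x⁻¹ * v⁻¹ * (x⁻¹)⁻¹, hnorm x⁻¹ (inv_mem hx) v⁻¹ (inv_mem hv),
          x⁻¹, inv_mem hx, ?_⟩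
        group }
  intro g hg
  have hle : U ⊔ H ≤ K := by
    apply sup_le
    · intro u hu; exact ⟨u, hu, 1, one_mem H, (mul_one u).symm⟩
    · intro x hx; exact ⟨1, one_mem U, x, hx, (one_mul x).symm⟩
  exact hle hg

end GroupGeneric

section StageE

variable {E I : Type} [AddCommGroup E] [Module ℚ E] [Fintype I] {c : RootSystemCtx E I}
  {P : PsiData c} {R : Type} [CommRing R] {Mb : Type} [AddCommGroup Mb] [Module R Mb]
  {zb : Module.Basis P.Ψ R Mb} {ebS fbS : I → Module.End R Mb}

lemma hOp_unit_inv_coe (h : IsChevAction P zb ebS fbS) (i : I) (t : Rˣ)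
    (gh : (Module.End R Mb)ˣ) (hgh : (gh : Module.End R Mb) = hOp ebS fbS i t) :
    ((gh⁻¹ : (Module.End R Mb)ˣ) : Module.End R Mb) = hOp ebS fbS i t⁻¹ := by
  have h1 : (gh : Module.End R Mb) * hOp ebS fbS i t⁻¹ = 1 := by
    rw [hgh]; exact hOp_mul_hOp_inv h i t
  calc ((gh⁻¹ : (Module.End R Mb)ˣ) : Module.End R Mb)
      = ↑gh⁻¹ * ((gh : Module.End R Mb) * hOp ebS fbS i t⁻¹) := by rw [h1, mul_one]
    _ = (↑gh⁻¹ * (gh : Module.End R Mb)) * hOp ebS fbS i t⁻¹ := by rw [mul_assoc]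
    _ = hOp ebS fbS i t⁻¹ := by rw [Units.inv_mul, one_mul]

lemma hOp_conj_unit (h : IsChevAction P zb ebS fbS) (eb : E → Module.End R Mb)
    (hline : ∀ γ ∈ c.Φ, ∀ μ : P.Ψ, eb γ (zb μ) = 0 ∨
      ∃ (hm : (μ : E) + γ ∈ P.Ψ) (co : R), eb γ (zb μ) = co • zb ⟨(μ : E) + γ, hm⟩)
    {γ : E} (hγ : γ ∈ c.Φ) (i : I) (t : Rˣ) (u : R)
    (gh v : (Module.End R Mb)ˣ) (hgh : (gh : Module.End R Mb) = hOp ebS fbS i t)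
    (hv : (v : Module.End R Mb) = 1 + u • eb γ) :
    ∃ k : ℤ, ((gh * v * gh⁻¹ : (Module.End R Mb)ˣ) : Module.End R Mb) =
      1 + (u * ((t ^ k : Rˣ) : R)) • eb γ := by
  obtain ⟨k, hk⟩ := c.crystal (c.α i) (c.α_mem i) γ hγ
  refine ⟨k, ?_⟩
  rw [Units.val_mul, Units.val_mul, hgh, hv,
    hOp_conj_end h eb hline hγ i t u k hk.symm, mul_assoc, ← hgh, ← Units.val_mul,
    mul_inv_cancel, Units.val_one, mul_one]

lemma hgroup_conj_closure (h : IsChevAction P zb ebS fbS) (S : Set (Module.End R Mb)ˣ)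
    (hS : ∀ (i : I) (t : Rˣ) (gh : (Module.End R Mb)ˣ),
      (gh : Module.End R Mb) = hOp ebS fbS i t →
      ∀ v ∈ S, gh * v * gh⁻¹ ∈ Subgroup.closure S) :
    ∀ g ∈ Hgroup ebS fbS, ∀ v ∈ Subgroup.closure S, g * v * g⁻¹ ∈ Subgroup.closure S := by
  intro g hg
  rw [Hgroup] at hg
  have key : (∀ v ∈ Subgroup.closure S, g * v * g⁻¹ ∈ Subgroup.closure S) ∧
      (∀ v ∈ Subgroup.closure S, g⁻¹ * v * g ∈ Subgroup.closure S) := by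
    induction hg using Subgroup.closure_induction with
    | mem x hx =>
        obtain ⟨i, t, hxc⟩ := hx
        constructor
        · exact conj_closure_le S x (fun v hv => hS i t x hxc v hv)
        · have : ∀ v ∈ S, x⁻¹ * v * (x⁻¹)⁻¹ ∈ Subgroup.closure S := fun v hv =>
            hS i t⁻¹ x⁻¹ (hOp_unit_inv_coe h i t x hxc) v hv
          have h2 := conj_closure_le S x⁻¹ this
          intro v hv
          have := h2 v hv
          rwa [inv_inv] at this
    | one => exact ⟨fun v hv => by simpa using hv, fun v hv => by simpa using hv⟩
    | mul a b ha hb iha ihb =>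
        constructor
        · intro v hv
          have := iha.1 _ (ihb.1 v hv)
          rwa [show a * (b * v * b⁻¹) * a⁻¹ = (a * b) * v * (a * b)⁻¹ by group] at this
        · intro v hv
          have := ihb.2 _ (iha.2 v hv)
          rwa [show b⁻¹ * (a⁻¹ * v * a) * b = (a * b)⁻¹ * v * (a * b) by group] at this
    | inv a ha iha =>
        refine ⟨fun v hv => iha.2 v hv, fun v hv => ?_⟩
        have := iha.1 v hv
        rwa [show a * v * a⁻¹ = a⁻¹⁻¹ * v * a⁻¹ by group] at this
  exact key.1

lemma hgroup_conj_uplus (h : IsChevAction P zb ebS fbS) (eb : E → Module.End R Mb)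
    (hline : ∀ γ ∈ c.Φ, ∀ μ : P.Ψ, eb γ (zb μ) = 0 ∨
      ∃ (hm : (μ : E) + γ ∈ P.Ψ) (co : R), eb γ (zb μ) = co • zb ⟨(μ : E) + γ, hm⟩) :
    ∀ g ∈ Hgroup ebS fbS, ∀ v ∈ Uplus c eb, g * v * g⁻¹ ∈ Uplus c eb := by
  apply hgroup_conj_closure h
  rintro i t gh hgh v ⟨γ, hpos, u, hv⟩
  obtain ⟨k, hk⟩ := hOp_conj_unit h eb hline hpos.1 i t u gh v hgh hv
  exact Subgroup.subset_closure ⟨γ, hpos, u * ((t ^ k : Rˣ) : R), hk⟩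

lemma hgroup_conj_uminus (h : IsChevAction P zb ebS fbS) (eb : E → Module.End R Mb)
    (hline : ∀ γ ∈ c.Φ, ∀ μ : P.Ψ, eb γ (zb μ) = 0 ∨
      ∃ (hm : (μ : E) + γ ∈ P.Ψ) (co : R), eb γ (zb μ) = co • zb ⟨(μ : E) + γ, hm⟩) :
    ∀ g ∈ Hgroup ebS fbS, ∀ v ∈ Uminus c eb, g * v * g⁻¹ ∈ Uminus c eb := by
  apply hgroup_conj_closure h
  rintro i t gh hgh v ⟨γ, hpos, u, hv⟩
  have hγ : γ ∈ c.Φ := by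
    have := c.neg_root_mem hpos.1
    rwa [neg_neg] at this
  obtain ⟨k, hk⟩ := hOp_conj_unit h eb hline hγ i t u gh v hgh hv
  exact Subgroup.subset_closure ⟨γ, hpos, u * ((t ^ k : Rˣ) : R), hk⟩

end StageE

section Triangular

open scoped Classical

variable {E I : Type} [AddCommGroup E] [Module ℚ E] [Fintype I] {c : RootSystemCtx E I}
  {P : PsiData c} {R : Type} [CommRing R] {Mb : Type} [AddCommGroup Mb] [Module R Mb]
  [Fintype P.Ψ] (zb : Module.Basis P.Ψ R Mb)

/-- Matrix entry of an endomorphism in the basis `zb`. -/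
def ent (A : Module.End R Mb) (μ ν : P.Ψ) : R := zb.repr (A (zb μ)) ν

lemma ent_mul (A B : Module.End R Mb) (μ ν : P.Ψ) :
    ent zb (A * B) μ ν = ∑ ρ : P.Ψ, ent zb B μ ρ * ent zb A ρ ν := by
  unfold ent
  rw [Module.End.mul_apply]
  conv_lhs => rw [← zb.sum_repr (B (zb μ))]
  rw [map_sum, map_sum, Finsupp.finset_sum_apply]
  apply Finset.sum_congr rfl
  intro ρ _
  rw [map_smul, map_smul, Finsupp.smul_apply, smul_eq_mul]

lemma ent_one (μ ν : P.Ψ) : ent zb (1 : Module.End R Mb) μ ν = if ν = μ then 1 else 0 := by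
  unfold ent
  rw [Module.End.one_apply, zb.repr_self, Finsupp.single_apply]
  by_cases h : ν = μ
  · rw [if_pos h, if_pos h.symm]
  · rw [if_neg h, if_neg (fun hc => h hc.symm)]

lemma ent_add (A B : Module.End R Mb) (μ ν : P.Ψ) :
    ent zb (A + B) μ ν = ent zb A μ ν + ent zb B μ ν := by
  unfold ent
  rw [LinearMap.add_apply, map_add, Finsupp.add_apply]

lemma ent_neg (A : Module.End R Mb) (μ ν : P.Ψ) : ent zb (-A) μ ν = -ent zb A μ ν := by
  unfold ent
  rw [LinearMap.neg_apply, map_neg, Finsupp.neg_apply]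

lemma ent_sub (A B : Module.End R Mb) (μ ν : P.Ψ) :
    ent zb (A - B) μ ν = ent zb A μ ν - ent zb B μ ν := by
  unfold ent
  rw [LinearMap.sub_apply, map_sub, Finsupp.sub_apply]

lemma ent_zero (μ ν : P.Ψ) : ent zb (0 : Module.End R Mb) μ ν = 0 := by
  unfold ent; simp

lemma ent_eq_iff (A B : Module.End R Mb) (h : ∀ μ ν, ent zb A μ ν = ent zb B μ ν) : A = B := by
  apply zb.ext
  intro μ
  apply zb.ext_elem
  intro ν
  exact h μ ν

/-- `A` is strictly triangular with respect to the "height" function `φ`. -/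
def StrictT (φ : P.Ψ → ℚ) (A : Module.End R Mb) : Prop :=
  ∀ μ ν : P.Ψ, φ ν ≤ φ μ → ent zb A μ ν = 0

/-- `A` is diagonal. -/
def DiagT (A : Module.End R Mb) : Prop := ∀ μ ν : P.Ψ, ν ≠ μ → ent zb A μ ν = 0

variable {zb}

lemma strictT_mul {φ : P.Ψ → ℚ} {A B : Module.End R Mb} (hA : StrictT zb φ A)
    (hB : StrictT zb φ B) : StrictT zb φ (A * B) := by
  intro μ ν hle
  rw [ent_mul]
  apply Finset.sum_eq_zero
  intro ρ _
  by_cases hρ : φ ρ ≤ φ μ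
  · rw [hB μ ρ hρ, zero_mul]
  · push_neg at hρ
    rw [hA ρ ν (hle.trans hρ.le), mul_zero]

lemma strictT_add {φ : P.Ψ → ℚ} {A B : Module.End R Mb} (hA : StrictT zb φ A)
    (hB : StrictT zb φ B) : StrictT zb φ (A + B) := by
  intro μ ν hle
  rw [ent_add, hA μ ν hle, hB μ ν hle, add_zero]

lemma strictT_zero {φ : P.Ψ → ℚ} : StrictT zb φ (0 : Module.End R Mb) := by
  intro μ ν _
  rw [ent_zero]

lemma strictT_neg {φ : P.Ψ → ℚ} {A : Module.End R Mb} (hA : StrictT zb φ A) :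
    StrictT zb φ (-A) := by
  intro μ ν hle
  rw [ent_neg, hA μ ν hle, neg_zero]

lemma strictT_sum {φ : P.Ψ → ℚ} {s : Finset ℕ} {F : ℕ → Module.End R Mb}
    (hF : ∀ j ∈ s, StrictT zb φ (F j)) : StrictT zb φ (∑ j ∈ s, F j) := by
  classical
  induction s using Finset.induction with
  | empty => simpa using strictT_zero
  | insert x t hx ih =>
      rw [Finset.sum_insert hx]
      exact strictT_add (hF _ (Finset.mem_insert_self _ _))
        (ih fun j hj => hF j (Finset.mem_insert_of_mem hj))

/-- rank function associated to `φ`. -/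
def rkk (φ : P.Ψ → ℚ) (μ : P.Ψ) : ℕ := (Finset.univ.filter fun ρ => φ ρ < φ μ).card

lemma rkk_lt {φ : P.Ψ → ℚ} {μ ν : P.Ψ} (h : φ μ < φ ν) : rkk φ μ < rkk φ ν := by
  apply Finset.card_lt_card
  constructor
  · intro ρ hρ
    rw [Finset.mem_filter] at hρ ⊢
    exact ⟨hρ.1, hρ.2.trans h⟩
  · intro hsub
    have : μ ∈ Finset.univ.filter fun ρ => φ ρ < φ ν := by
      rw [Finset.mem_filter]; exact ⟨Finset.mem_univ _, h⟩
    have := hsub this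
    rw [Finset.mem_filter] at this
    exact absurd this.2 (lt_irrefl _)

lemma rkk_le_card {φ : P.Ψ → ℚ} (μ : P.Ψ) : rkk φ μ ≤ Fintype.card P.Ψ :=
  le_trans (Finset.card_filter_le _ _) (le_of_eq rfl)

lemma strictT_pow_ent {φ : P.Ψ → ℚ} {A : Module.End R Mb} (hA : StrictT zb φ A) :
    ∀ (n : ℕ) (μ ν : P.Ψ), ent zb (A ^ n) μ ν ≠ 0 → rkk φ μ + n ≤ rkk φ ν := by
  intro n
  induction n with
  | zero =>
      intro μ ν hne
      rw [pow_zero, ent_one] at hne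
      by_cases h : ν = μ
      · subst h; simp
      · rw [if_neg h] at hne; exact absurd rfl hne
  | succ n ih =>
      intro μ ν hne
      rw [pow_succ'] at hne
      rw [ent_mul] at hne
      obtain ⟨ρ, _, hρ⟩ := Finset.exists_ne_zero_of_sum_ne_zero hne
      have h1 : ent zb (A ^ n) μ ρ ≠ 0 := fun h => hρ (by rw [h, zero_mul])
      have h2 : ent zb A ρ ν ≠ 0 := fun h => hρ (by rw [h, mul_zero])
      have hρν : φ ρ < φ ν := by
        by_contra hcon
        push_neg at hcon
        exact h2 (hA ρ ν hcon)
      have := ih μ ρ h1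
      have := rkk_lt hρν
      omega

lemma strictT_nilpotent {φ : P.Ψ → ℚ} {A : Module.End R Mb} (hA : StrictT zb φ A) :
    A ^ (Fintype.card P.Ψ + 1) = 0 := by
  apply ent_eq_iff zb
  intro μ ν
  rw [ent_zero]
  by_contra hne
  have := strictT_pow_ent hA (Fintype.card P.Ψ + 1) μ ν hne
  have := rkk_le_card (φ := φ) ν
  omega

lemma strictT_pow {φ : P.Ψ → ℚ} {A : Module.End R Mb} (hA : StrictT zb φ A) {j : ℕ}
    (hj : 1 ≤ j) : StrictT zb φ (A ^ j) := by
  induction j with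
  | zero => omega
  | succ j ih =>
      by_cases hj0 : j = 0
      · subst hj0; rw [pow_one]; exact hA
      · rw [pow_succ]
        exact strictT_mul (ih (by omega)) hA

/-- If `g` is a unit with `g - 1` strictly triangular, then its inverse also has this shape. -/
lemma strictT_inv {φ : P.Ψ → ℚ} (g : (Module.End R Mb)ˣ)
    (hg : StrictT zb φ ((g : Module.End R Mb) - 1)) :
    StrictT zb φ (((g⁻¹ : (Module.End R Mb)ˣ) : Module.End R Mb) - 1) := by
  set s : Module.End R Mb := (g : Module.End R Mb) - 1 with hs
  set N : ℕ := Fintype.card P.Ψ + 1 with hN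
  set T : Module.End R Mb := ∑ j ∈ Finset.range N, (-s) ^ j with hT
  have hnil : (-s) ^ N = 0 := by
    have := strictT_nilpotent (strictT_neg hg)
    exact this
  have hmul : (g : Module.End R Mb) * T = 1 := by
    have h1 : ((-s) - 1) * T = (-s) ^ N - 1 := mul_geom_sum (-s) N
    rw [hnil, zero_sub] at h1
    have h2 : (g : Module.End R Mb) = 1 + s := by rw [hs]; abel
    rw [h2]
    have : (1 + s : Module.End R Mb) = -((-s) - 1) := by abel
    rw [this, neg_mul, h1, neg_neg]
  have hinv : ((g⁻¹ : (Module.End R Mb)ˣ) : Module.End R Mb) = T := by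
    calc ((g⁻¹ : (Module.End R Mb)ˣ) : Module.End R Mb)
        = ↑g⁻¹ * ((g : Module.End R Mb) * T) := by rw [hmul, mul_one]
      _ = (↑g⁻¹ * (g : Module.End R Mb)) * T := by rw [mul_assoc]
      _ = T := by rw [Units.inv_mul, one_mul]
  rw [hinv]
  have hsplit : T - 1 = ∑ j ∈ Finset.Ico 1 N, (-s) ^ j := by
    rw [hT, Finset.range_eq_Ico, Finset.sum_eq_sum_Ico_succ_bot (by omega : 0 < N)]
    simp
  rw [hsplit]
  have : ∀ j ∈ Finset.Ico 1 N, StrictT zb φ ((-s) ^ j) := fun j hj =>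
    strictT_pow (strictT_neg hg) (Finset.mem_Ico.1 hj).1
  exact strictT_sum this

lemma diagT_mul {A B : Module.End R Mb} (hA : DiagT zb A) (hB : DiagT zb B) :
    DiagT zb (A * B) := by
  intro μ ν hne
  rw [ent_mul]
  apply Finset.sum_eq_zero
  intro ρ _
  by_cases hρ : ρ = μ
  · subst hρ; rw [hA ρ ν hne, mul_zero]
  · rw [hB μ ρ hρ, zero_mul]

lemma diagT_entry_unit (g : (Module.End R Mb)ˣ) (hg : DiagT zb (g : Module.End R Mb)) (ν : P.Ψ) :
    ∃ a : R, ent zb (g : Module.End R Mb) ν ν * a = 1 := by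
  refine ⟨ent zb ((g⁻¹ : (Module.End R Mb)ˣ) : Module.End R Mb) ν ν, ?_⟩
  have h1 : ent zb ((g : Module.End R Mb) * ((g⁻¹ : (Module.End R Mb)ˣ) : Module.End R Mb)) ν ν
      = 1 := by
    rw [← Units.val_mul, mul_inv_cancel, Units.val_one, ent_one, if_pos rfl]
  rw [ent_mul] at h1
  rw [← h1]
  rw [Finset.sum_eq_single ν]
  · ring
  · intro ρ _ hρ
    rw [hg ρ ν ?_, mul_zero]
    · exact fun hc => hρ (by rw [hc])
  · intro hn; exact absurd (Finset.mem_univ ν) hn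

lemma diagT_inv (g : (Module.End R Mb)ˣ) (hg : DiagT zb (g : Module.End R Mb)) :
    DiagT zb ((g⁻¹ : (Module.End R Mb)ˣ) : Module.End R Mb) := by
  intro μ ν hne
  obtain ⟨a, ha⟩ := diagT_entry_unit g hg ν
  have h1 : ent zb (((g : Module.End R Mb)) * ((g⁻¹ : (Module.End R Mb)ˣ) :
      Module.End R Mb)) μ ν = 0 := by
    rw [← Units.val_mul, mul_inv_cancel, Units.val_one, ent_one, if_neg hne]
  rw [ent_mul] at h1
  rw [Finset.sum_eq_single ν] at h1
  · calc ent zb ((g⁻¹ : (Module.End R Mb)ˣ) : Module.End R Mb) μ ν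
        = ent zb ((g⁻¹ : (Module.End R Mb)ˣ) : Module.End R Mb) μ ν
          * (ent zb (g : Module.End R Mb) ν ν * a) := by rw [ha, mul_one]
      _ = (ent zb ((g⁻¹ : (Module.End R Mb)ˣ) : Module.End R Mb) μ ν
          * ent zb (g : Module.End R Mb) ν ν) * a := by ring
      _ = 0 := by rw [h1, zero_mul]
  · intro ρ _ hρ
    rw [hg ρ ν (fun hc => hρ (by rw [hc])), mul_zero]
  · intro hn; exact absurd (Finset.mem_univ ν) hn

/-- A unit that is both unipotent-upper and diagonal is the identity. -/
lemma strictT_diagT_eq_one {φ : P.Ψ → ℚ} (g : (Module.End R Mb)ˣ)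
    (hup : StrictT zb φ ((g : Module.End R Mb) - 1)) (hdiag : DiagT zb (g : Module.End R Mb)) :
    g = 1 := by
  apply Units.ext
  rw [Units.val_one]
  apply ent_eq_iff zb
  intro μ ν
  have hsub : ent zb ((g : Module.End R Mb) - 1) μ ν
      = ent zb (g : Module.End R Mb) μ ν - ent zb 1 μ ν := ent_sub zb _ _ μ ν
  by_cases hne : ν = μ
  · subst hne
    have := hup ν ν (le_refl _)
    rw [hsub, ent_one, if_pos rfl] at this
    have : ent zb (g : Module.End R Mb) ν ν = 1 := by linear_combination this
    rw [this, ent_one, if_pos rfl]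
  · rw [hdiag μ ν hne, ent_one, if_neg hne]

end Triangular

section Height

variable {E I : Type} [AddCommGroup E] [Module ℚ E] [Fintype I]

/-- The basis of simple roots. -/
noncomputable def rootBasis (c : RootSystemCtx E I) : Module.Basis I ℚ E :=
  Module.Basis.mk c.α_indep (le_of_eq c.α_span.symm)

/-- Height functional: sum of the coordinates w.r.t. the simple roots. -/
noncomputable def hgtF (c : RootSystemCtx E I) : E →ₗ[ℚ] ℚ :=
  ∑ i, (rootBasis c).coord i

lemma hgt_pos {c : RootSystemCtx E I} {γ : E} (hpos : c.IsPos γ) : 0 < hgtF c γ := by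
  obtain ⟨hγ, cf, hcf, hsum⟩ := hpos
  have hb : ∀ j, (rootBasis c) j = c.α j := fun j => by rw [rootBasis, Module.Basis.mk_apply]
  have hrepr : ∀ j, (rootBasis c).repr γ j = cf j := by
    intro j
    rw [hsum]
    have : (∑ i, cf i • c.α i) = ∑ i, cf i • (rootBasis c) i := by
      apply Finset.sum_congr rfl; intro i _; rw [hb]
    rw [this, map_sum, Finsupp.finset_sum_apply]
    rw [Finset.sum_eq_single j]
    · rw [map_smul, Module.Basis.repr_self, Finsupp.smul_apply, Finsupp.single_eq_same, smul_eq_mul,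
        mul_one]
    · intro i _ hij
      rw [map_smul, Module.Basis.repr_self, Finsupp.smul_apply,
        Finsupp.single_eq_of_ne' hij, smul_zero]
    · intro hn; exact absurd (Finset.mem_univ j) hn
  have hval : hgtF c γ = ∑ j, cf j := by
    rw [hgtF, LinearMap.sum_apply]
    apply Finset.sum_congr rfl
    intro j _
    rw [Module.Basis.coord_apply, hrepr]
  rw [hval]
  rcases (Finset.sum_nonneg (fun j _ => hcf j)).eq_or_lt with h0 | h
  · exfalso
    have hall : ∀ j ∈ Finset.univ, cf j = 0 :=
      (Finset.sum_eq_zero_iff_of_nonneg (fun j _ => hcf j)).1 h0.symm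
    have : γ = 0 := by
      rw [hsum]
      apply Finset.sum_eq_zero
      intro i _
      rw [hall i (Finset.mem_univ i), zero_smul]
    exact c.root_ne_zero hγ this
  · exact h

end Height

section StageF2

open scoped Classical

variable {E I : Type} [AddCommGroup E] [Module ℚ E] [Fintype I] {c : RootSystemCtx E I}
  {P : PsiData c} {R : Type} [CommRing R] {Mb : Type} [AddCommGroup Mb] [Module R Mb]
  [Fintype P.Ψ] {zb : Module.Basis P.Ψ R Mb} {ebS fbS : I → Module.End R Mb}

lemma ent_smul (zb : Module.Basis P.Ψ R Mb) (u : R) (A : Module.End R Mb) (μ ν : P.Ψ) :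
    ent zb (u • A) μ ν = u * ent zb A μ ν := by
  unfold ent
  rw [LinearMap.smul_apply, map_smul, Finsupp.smul_apply, smul_eq_mul]

lemma xgen_strict (zb : Module.Basis P.Ψ R Mb) {φ : P.Ψ → ℚ} (eb : E → Module.End R Mb)
    (hline : ∀ μ : P.Ψ, ∀ {γ : E}, γ ∈ c.Φ → (eb γ (zb μ) = 0 ∨
      ∃ (hm : (μ : E) + γ ∈ P.Ψ) (co : R), eb γ (zb μ) = co • zb ⟨(μ : E) + γ, hm⟩))
    {γ : E} (hγ : γ ∈ c.Φ)
    (hγφ : ∀ μ ν : P.Ψ, (ν : E) = (μ : E) + γ → φ μ < φ ν) (u : R) :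
    StrictT zb φ (u • eb γ) := by
  intro μ ν hle
  rw [ent_smul]
  rcases hline μ hγ with h0 | ⟨hm, co, hco⟩
  · unfold ent; rw [h0, map_zero, Finsupp.coe_zero, Pi.zero_apply, mul_zero]
  · unfold ent
    rw [hco, map_smul, Module.Basis.repr_self, Finsupp.smul_apply, Finsupp.single_apply]
    have hne : ¬ (⟨(μ : E) + γ, hm⟩ : P.Ψ) = ν := by
      intro hEq
      have := hγφ μ ν (by rw [← hEq])
      linarith
    rw [if_neg hne]
    simp

/-- Elements of a closure of `x_γ(u)`-type generators are unipotent triangular. -/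
lemma closure_strict (zb : Module.Basis P.Ψ R Mb) {φ : P.Ψ → ℚ} (S : Set (Module.End R Mb)ˣ)
    (hS : ∀ g ∈ S, StrictT zb φ ((g : Module.End R Mb) - 1)) :
    ∀ g ∈ Subgroup.closure S, StrictT zb φ ((g : Module.End R Mb) - 1) := by
  intro g hg
  induction hg using Subgroup.closure_induction with
  | mem x hx => exact hS x hx
  | one => simpa using strictT_zero
  | mul a b ha hb iha ihb =>
      have hEq : ((a * b : (Module.End R Mb)ˣ) : Module.End R Mb) - 1 =
          ((a : Module.End R Mb) - 1) * ((b : Module.End R Mb) - 1) +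
          (((a : Module.End R Mb) - 1) + ((b : Module.End R Mb) - 1)) := by
        rw [Units.val_mul]
        noncomm_ring
      rw [hEq]
      exact strictT_add (strictT_mul iha ihb) (strictT_add iha ihb)
  | inv a ha iha => exact strictT_inv a iha

lemma uplus_strictT (zb : Module.Basis P.Ψ R Mb) (eb : E → Module.End R Mb)
    (hline : ∀ γ ∈ c.Φ, ∀ μ : P.Ψ, eb γ (zb μ) = 0 ∨
      ∃ (hm : (μ : E) + γ ∈ P.Ψ) (co : R), eb γ (zb μ) = co • zb ⟨(μ : E) + γ, hm⟩) :
    ∀ g ∈ Uplus c eb,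
      StrictT zb (fun μ => hgtF c (μ : E)) ((g : Module.End R Mb) - 1) := by
  apply closure_strict
  rintro g ⟨γ, hpos, u, hu⟩
  have h1 : (g : Module.End R Mb) - 1 = u • eb γ := by rw [hu]; abel
  rw [h1]
  apply xgen_strict zb eb (fun μ {γ} hγ => hline γ hγ μ) hpos.1
  intro μ ν hsum
  have : hgtF c (ν : E) = hgtF c (μ : E) + hgtF c γ := by rw [hsum, map_add]
  have hp := hgt_pos hpos
  show hgtF c (μ : E) < hgtF c (ν : E)
  linarith

lemma uminus_strictT (zb : Module.Basis P.Ψ R Mb) (eb : E → Module.End R Mb)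
    (hline : ∀ γ ∈ c.Φ, ∀ μ : P.Ψ, eb γ (zb μ) = 0 ∨
      ∃ (hm : (μ : E) + γ ∈ P.Ψ) (co : R), eb γ (zb μ) = co • zb ⟨(μ : E) + γ, hm⟩) :
    ∀ g ∈ Uminus c eb,
      StrictT zb (fun μ => -hgtF c (μ : E)) ((g : Module.End R Mb) - 1) := by
  apply closure_strict
  rintro g ⟨γ, hpos, u, hu⟩
  have hγ : γ ∈ c.Φ := by
    have := c.neg_root_mem hpos.1
    rwa [neg_neg] at this
  have h1 : (g : Module.End R Mb) - 1 = u • eb γ := by rw [hu]; abel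
  rw [h1]
  apply xgen_strict zb eb (fun μ {γ} hγ => hline γ hγ μ) hγ
  intro μ ν hsum
  have h2 : hgtF c (ν : E) = hgtF c (μ : E) + hgtF c γ := by rw [hsum, map_add]
  have h3 : hgtF c γ = -hgtF c (-γ) := by rw [map_neg, neg_neg]
  have hp := hgt_pos hpos
  show -hgtF c (μ : E) < -hgtF c (ν : E)
  linarith

lemma hgroup_diagT (h : IsChevAction P zb ebS fbS) :
    ∀ g ∈ Hgroup ebS fbS, DiagT zb (g : Module.End R Mb) := by
  intro g hg
  rw [Hgroup] at hg
  induction hg using Subgroup.closure_induction with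
  | mem x hx =>
      obtain ⟨i, t, hc⟩ := hx
      intro μ ν hne
      unfold ent
      rw [hc, hOp_apply h i t μ (psi_pairing P μ.2 (c.α_mem i)), map_smul, Module.Basis.repr_self,
        Finsupp.smul_apply, Finsupp.single_apply, if_neg (fun hc' => hne hc'.symm), smul_zero]
  | one =>
      intro μ ν hne
      rw [Units.val_one, ent_one, if_neg hne]
  | mul a b ha hb iha ihb =>
      rw [Units.val_mul]
      exact diagT_mul iha ihb
  | inv a ha iha => exact diagT_inv a iha

/-- Monomial property. -/
def MonoT (zb : Module.Basis P.Ψ R Mb) (g : (Module.End R Mb)ˣ) : Prop :=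
  ∀ μ : P.Ψ, ∃ (ν : P.Ψ) (cu : Rˣ), (g : Module.End R Mb) (zb μ) = (cu : R) • zb ν

lemma unit_inv_apply (g : (Module.End R Mb)ˣ) (v : Mb) :
    ((g⁻¹ : (Module.End R Mb)ˣ) : Module.End R Mb) ((g : Module.End R Mb) v) = v := by
  rw [← Module.End.mul_apply, ← Units.val_mul, inv_mul_cancel, Units.val_one,
    Module.End.one_apply]

lemma monoT_inv [Nontrivial R] (zb : Module.Basis P.Ψ R Mb) (a : (Module.End R Mb)ˣ)
    (ha : MonoT zb a) : MonoT zb a⁻¹ := by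
  set F : P.Ψ → P.Ψ := fun μ => Classical.choose (ha μ) with hF
  have hFspec : ∀ μ, ∃ cu : Rˣ, (a : Module.End R Mb) (zb μ) = (cu : R) • zb (F μ) :=
    fun μ => Classical.choose_spec (ha μ)
  have hinj : Function.Injective F := by
    intro μ₁ μ₂ hFEq
    by_contra hne
    obtain ⟨c₁, hc₁⟩ := hFspec μ₁
    obtain ⟨c₂, hc₂⟩ := hFspec μ₂
    have h₁ : zb μ₁ = (c₁ : R) • ((a⁻¹ : (Module.End R Mb)ˣ) : Module.End R Mb) (zb (F μ₁)) := by
      rw [← map_smul, ← hc₁, unit_inv_apply]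
    have h₂ : zb μ₂ = (c₂ : R) • ((a⁻¹ : (Module.End R Mb)ˣ) : Module.End R Mb) (zb (F μ₂)) := by
      rw [← map_smul, ← hc₂, unit_inv_apply]
    rw [← hFEq] at h₂
    have hY : ((a⁻¹ : (Module.End R Mb)ˣ) : Module.End R Mb) (zb (F μ₁)) =
        ((c₁⁻¹ : Rˣ) : R) • zb μ₁ := by
      rw [h₁, smul_smul, ← Units.val_mul, inv_mul_cancel, Units.val_one, one_smul]
    rw [hY, smul_smul] at h₂
    have := congrArg (fun v => zb.repr v μ₂) h₂
    simp [Finsupp.single_apply, hne] at this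
  have hsurj : Function.Surjective F := Finite.injective_iff_surjective.1 hinj
  intro μ
  obtain ⟨ρ, hρ⟩ := hsurj μ
  obtain ⟨cu, hcu⟩ := hFspec ρ
  rw [hρ] at hcu
  refine ⟨ρ, cu⁻¹, ?_⟩
  have : ((a⁻¹ : (Module.End R Mb)ˣ) : Module.End R Mb) ((cu : R) • zb μ) = zb ρ := by
    rw [← hcu, unit_inv_apply]
  rw [map_smul] at this
  calc ((a⁻¹ : (Module.End R Mb)ˣ) : Module.End R Mb) (zb μ)
      = ((cu⁻¹ : Rˣ) : R) • ((cu : R) •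
        ((a⁻¹ : (Module.End R Mb)ˣ) : Module.End R Mb) (zb μ)) := by
        rw [smul_smul, ← Units.val_mul, inv_mul_cancel, Units.val_one, one_smul]
    _ = ((cu⁻¹ : Rˣ) : R) • zb ρ := by rw [this]

lemma ngroup_monoT [Nontrivial R] (h : IsChevAction P zb ebS fbS) :
    ∀ g ∈ Ngroup ebS fbS, MonoT zb g := by
  intro g hg
  rw [Ngroup] at hg
  induction hg using Subgroup.closure_induction with
  | mem x hx =>
      obtain ⟨i, t, hc⟩ := hx
      intro μ
      have hti : (t : R) * ((t⁻¹ : Rˣ) : R) = 1 := by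
        rw [← Units.val_mul, mul_inv_cancel, Units.val_one]
      rcases psi_pairing P μ.2 (c.α_mem i) with hp | hp | hp
      · refine ⟨μ, 1, ?_⟩
        rw [hc, nOp_apply_zero h i _ _ μ (by rw [hp]; norm_num) (by rw [hp]; norm_num),
          Units.val_one, one_smul]
      · refine ⟨⟨(μ : E) - c.α i, psi_sub_mem P μ.2 i hp⟩, -t⁻¹, ?_⟩
        rw [hc, nOp_apply_pos h i _ _ hti μ hp, Units.val_neg]
      · refine ⟨⟨(μ : E) + c.α i, psi_add_mem P μ.2 i hp⟩, t, ?_⟩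
        rw [hc, nOp_apply_neg h i _ _ hti μ hp]
  | one => exact fun μ => ⟨μ, 1, by simp⟩
  | mul a b ha hb iha ihb =>
      intro μ
      obtain ⟨ν, cu, hcu⟩ := ihb μ
      obtain ⟨ρ, cu', hcu'⟩ := iha ν
      refine ⟨ρ, cu * cu', ?_⟩
      rw [Units.val_mul, Units.val_mul, Module.End.mul_apply, hcu, map_smul, hcu', smul_smul]
  | inv a ha iha => exact monoT_inv zb a iha

/-- mixed upper/lower-diagonal argument. -/
lemma mixed_diagT (zb : Module.Basis P.Ψ R Mb) {φ : P.Ψ → ℚ} {A B D : Module.End R Mb}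
    (hA : StrictT zb φ (A - 1)) (hB : StrictT zb (fun μ => -φ μ) (B - 1)) (hD : DiagT zb D)
    (hEq : A = B * D) : DiagT zb A := by
  intro μ ν hne
  rcases le_or_gt (φ ν) (φ μ) with hle | hlt
  · have h1 := hA μ ν hle
    rw [ent_sub, ent_one, if_neg hne] at h1
    linear_combination h1
  · rw [hEq, ent_mul]
    apply Finset.sum_eq_zero
    intro ρ _
    by_cases hρ : ρ = μ
    · subst hρ
      have h1 := hB ρ ν (by show -φ ν ≤ -φ ρ; linarith)
      rw [ent_sub, ent_one, if_neg hne] at h1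
      have : ent zb B ρ ν = 0 := by linear_combination h1
      rw [this, mul_zero]
    · rw [hD μ ρ hρ, zero_mul]

lemma hgroup_le_ngroup (h : IsChevAction P zb ebS fbS) : Hgroup ebS fbS ≤ Ngroup ebS fbS := by
  rw [Hgroup]
  rw [Subgroup.closure_le]
  rintro g ⟨i, t, hc⟩
  rw [SetLike.mem_coe]
  have htiA : (t : R) * ((t⁻¹ : Rˣ) : R) = 1 := by
    rw [← Units.val_mul, mul_inv_cancel, Units.val_one]
  have htiB : ((-1 : Rˣ) : R) * (((-1 : Rˣ)⁻¹ : Rˣ) : R) = 1 := by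
    rw [← Units.val_mul, mul_inv_cancel, Units.val_one]
  have hA2 : nOp ebS fbS i (-(t : R)) (-((t⁻¹ : Rˣ) : R)) *
      nOp ebS fbS i (t : R) ((t⁻¹ : Rˣ) : R) = 1 := by
    have := nOp_mul_inv h i (-(t : R)) (-((t⁻¹ : Rˣ) : R)) (by linear_combination htiA)
    rwa [neg_neg, neg_neg] at this
  have hB2 : nOp ebS fbS i (-((-1 : Rˣ) : R)) (-(((-1 : Rˣ)⁻¹ : Rˣ) : R)) *
      nOp ebS fbS i ((-1 : Rˣ) : R) (((-1 : Rˣ)⁻¹ : Rˣ) : R) = 1 := by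
    have := nOp_mul_inv h i (-((-1 : Rˣ) : R)) (-(((-1 : Rˣ)⁻¹ : Rˣ) : R))
      (by linear_combination htiB)
    rwa [neg_neg, neg_neg] at this
  set gA : (Module.End R Mb)ˣ :=
    ⟨nOp ebS fbS i (t : R) ((t⁻¹ : Rˣ) : R), nOp ebS fbS i (-(t : R)) (-((t⁻¹ : Rˣ) : R)),
      nOp_mul_inv h i _ _ htiA, hA2⟩ with hgA
  set gB : (Module.End R Mb)ˣ :=
    ⟨nOp ebS fbS i ((-1 : Rˣ) : R) (((-1 : Rˣ)⁻¹ : Rˣ) : R),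
      nOp ebS fbS i (-((-1 : Rˣ) : R)) (-(((-1 : Rˣ)⁻¹ : Rˣ) : R)),
      nOp_mul_inv h i _ _ htiB, hB2⟩ with hgB
  have hg : g = gA * gB := by
    apply Units.ext
    rw [Units.val_mul, hc, hOp]
  rw [hg]
  exact mul_mem (Subgroup.subset_closure ⟨i, t, rfl⟩) (Subgroup.subset_closure ⟨i, -1, rfl⟩)

lemma subgroups_eq_of_subsingleton {G : Type} [Group G] [Subsingleton G]
    (A B : Subgroup G) : A = B := by
  ext g
  rw [show g = 1 from Subsingleton.elim g 1]
  simp [one_mem]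

end StageF2
/-- Lemma 4.6: hᵢ(t) x_a(u) hᵢ(t)⁻¹ = x_a(u t^{(a,αᵢ^∨)}); hence H normalises U^±,
B^± = U^±·H are subgroups, and B⁺ ∩ B⁻ = H = B^± ∩ N. -/
theorem stmt_17 {E I : Type} [AddCommGroup E] [Module ℚ E] [Fintype I]
    (c : RootSystemCtx E I) (P : PsiData c)
    (M : Type) [AddCommGroup M] [Module ℂ M] (z : Module.Basis P.Ψ ℂ M)
    (e f : I → Module.End ℂ M)
    (he1 : ∀ (i : I) (μ : P.Ψ) (hm : (μ : E) + c.α i ∈ P.Ψ),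
      pr c.B (μ : E) (c.α i) = -1 → e i (z μ) = z ⟨(μ : E) + c.α i, hm⟩)
    (he0 : ∀ (i : I) (μ : P.Ψ), pr c.B (μ : E) (c.α i) ≠ -1 → e i (z μ) = 0)
    (hf1 : ∀ (i : I) (μ : P.Ψ) (hm : (μ : E) - c.α i ∈ P.Ψ),
      pr c.B (μ : E) (c.α i) = 1 → f i (z μ) = z ⟨(μ : E) - c.α i, hm⟩)
    (hf0 : ∀ (i : I) (μ : P.Ψ), pr c.B (μ : E) (c.α i) ≠ 1 → f i (z μ) = 0)
    (nu : I → (Module.End ℂ M)ˣ)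
    (hnu : ∀ i : I, (nu i : Module.End ℂ M) = nOp e f i 1 1)
    (eRoot : E → Module.End ℂ M)
    (heRoot : ∀ γ ∈ c.Φ, ∃ (i : I) (l : List I),
      ((l.map c.s).prod) (c.α i) = γ ∧ eRoot γ = conjOp nu (e i) l)
    (R : Type) [CommRing R] (Mb : Type) [AddCommGroup Mb] [Module R Mb]
    (zb : Module.Basis P.Ψ R Mb) (ebS fbS : I → Module.End R Mb)
    (hebS1 : ∀ (i : I) (μ : P.Ψ) (hm : (μ : E) + c.α i ∈ P.Ψ),
      pr c.B (μ : E) (c.α i) = -1 → ebS i (zb μ) = zb ⟨(μ : E) + c.α i, hm⟩)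
    (hebS0 : ∀ (i : I) (μ : P.Ψ), pr c.B (μ : E) (c.α i) ≠ -1 → ebS i (zb μ) = 0)
    (hfbS1 : ∀ (i : I) (μ : P.Ψ) (hm : (μ : E) - c.α i ∈ P.Ψ),
      pr c.B (μ : E) (c.α i) = 1 → fbS i (zb μ) = zb ⟨(μ : E) - c.α i, hm⟩)
    (hfbS0 : ∀ (i : I) (μ : P.Ψ), pr c.B (μ : E) (c.α i) ≠ 1 → fbS i (zb μ) = 0)
    (eb : E → Module.End R Mb)
    (hlink : ∀ γ ∈ c.Φ, ∀ μ ν : P.Ψ, ∃ k : ℤ,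
      z.repr (eRoot γ (z μ)) ν = (k : ℂ) ∧ zb.repr (eb γ (zb μ)) ν = (k : R))
    :
    (∀ (i : I) (a : E), a ∈ c.Φ → ∀ (u : R) (t : Rˣ) (k : ℤ),
      (k : ℚ) = pr c.B a (c.α i) →
      ∀ gh gx gx' : (Module.End R Mb)ˣ,
        (gh : Module.End R Mb) = hOp ebS fbS i t →
        (gx : Module.End R Mb) = 1 + u • eb a →
        (gx' : Module.End R Mb) = 1 + (u * ((t ^ k : Rˣ) : R)) • eb a →
        gh * gx * gh⁻¹ = gx') ∧
    (∀ g ∈ Hgroup ebS fbS, ∀ v ∈ Uplus c eb, g * v * g⁻¹ ∈ Uplus c eb) ∧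
    (∀ g ∈ Hgroup ebS fbS, ∀ v ∈ Uminus c eb, g * v * g⁻¹ ∈ Uminus c eb) ∧
    (∀ g ∈ Uplus c eb ⊔ Hgroup ebS fbS,
      ∃ v ∈ Uplus c eb, ∃ x ∈ Hgroup ebS fbS, g = v * x) ∧
    (∀ g ∈ Uminus c eb ⊔ Hgroup ebS fbS,
      ∃ v ∈ Uminus c eb, ∃ x ∈ Hgroup ebS fbS, g = v * x) ∧
    (Uplus c eb ⊔ Hgroup ebS fbS) ⊓ (Uminus c eb ⊔ Hgroup ebS fbS) = Hgroup ebS fbS ∧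
    (Uplus c eb ⊔ Hgroup ebS fbS) ⊓ Ngroup ebS fbS = Hgroup ebS fbS ∧
    (Uminus c eb ⊔ Hgroup ebS fbS) ⊓ Ngroup ebS fbS = Hgroup ebS fbS := by
  classical
  haveI : Fintype P.Ψ := P.finite.fintype
  have hAct : IsChevAction P zb ebS fbS := ⟨hebS1, hebS0, hfbS1, hfbS0⟩
  have hActC : IsChevAction P z e f := ⟨he1, he0, hf1, hf0⟩
  have hline : ∀ γ ∈ c.Φ, ∀ μ : P.Ψ, eb γ (zb μ) = 0 ∨
      ∃ (hm : (μ : E) + γ ∈ P.Ψ) (co : R), eb γ (zb μ) = co • zb ⟨(μ : E) + γ, hm⟩ :=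
    fun γ hγ μ => eb_line z eRoot zb eb hlink hγ
      (lineProp_eRoot hActC nu hnu eRoot heRoot hγ) μ
  have part1 : ∀ (i : I) (a : E), a ∈ c.Φ → ∀ (u : R) (t : Rˣ) (k : ℤ),
      (k : ℚ) = pr c.B a (c.α i) →
      ∀ gh gx gx' : (Module.End R Mb)ˣ,
        (gh : Module.End R Mb) = hOp ebS fbS i t →
        (gx : Module.End R Mb) = 1 + u • eb a →
        (gx' : Module.End R Mb) = 1 + (u * ((t ^ k : Rˣ) : R)) • eb a →
        gh * gx * gh⁻¹ = gx' := by
    intro i a ha u t k hk gh gx gx' hgh hgx hgx'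
    have hEnd := hOp_conj_end hAct eb hline ha i t u k hk
    have hmul : gh * gx = gx' * gh := by
      apply Units.ext
      rw [Units.val_mul, Units.val_mul, hgh, hgx, hgx']
      exact hEnd
    rw [hmul, mul_assoc, mul_inv_cancel, mul_one]
  have part2 : ∀ g ∈ Hgroup ebS fbS, ∀ v ∈ Uplus c eb, g * v * g⁻¹ ∈ Uplus c eb :=
    hgroup_conj_uplus hAct eb hline
  have part3 : ∀ g ∈ Hgroup ebS fbS, ∀ v ∈ Uminus c eb, g * v * g⁻¹ ∈ Uminus c eb :=
    hgroup_conj_uminus hAct eb hline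
  have part4 : ∀ g ∈ Uplus c eb ⊔ Hgroup ebS fbS,
      ∃ v ∈ Uplus c eb, ∃ x ∈ Hgroup ebS fbS, g = v * x :=
    join_decomp _ _ part2
  have part5 : ∀ g ∈ Uminus c eb ⊔ Hgroup ebS fbS,
      ∃ v ∈ Uminus c eb, ∃ x ∈ Hgroup ebS fbS, g = v * x :=
    join_decomp _ _ part3
  rcases subsingleton_or_nontrivial R with hss | hnt
  · haveI : Subsingleton Mb := Module.subsingleton R Mb
    haveI : Subsingleton (Module.End R Mb) :=
      ⟨fun A B => LinearMap.ext fun x => Subsingleton.elim _ _⟩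
    haveI : Subsingleton (Module.End R Mb)ˣ :=
      ⟨fun A B => Units.ext (Subsingleton.elim _ _)⟩
    exact ⟨part1, part2, part3, part4, part5,
      subgroups_eq_of_subsingleton _ _, subgroups_eq_of_subsingleton _ _,
      subgroups_eq_of_subsingleton _ _⟩
  · have hup := uplus_strictT zb eb hline
    have hlow := uminus_strictT zb eb hline
    have hdiagH := hgroup_diagT hAct
    -- Part 6
    have part6 : (Uplus c eb ⊔ Hgroup ebS fbS) ⊓ (Uminus c eb ⊔ Hgroup ebS fbS)
        = Hgroup ebS fbS := by
      apply le_antisymm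
      · intro g hg
        rw [Subgroup.mem_inf] at hg
        obtain ⟨hg1, hg2⟩ := hg
        obtain ⟨u, hu, x, hx, hgux⟩ := part4 g hg1
        obtain ⟨u', hu', x', hx', hgux'⟩ := part5 g hg2
        have hDd : DiagT zb ((x' * x⁻¹ : (Module.End R Mb)ˣ) : Module.End R Mb) := by
          rw [Units.val_mul]
          exact diagT_mul (hdiagH x' hx') (diagT_inv x (hdiagH x hx))
        have huu : u = u' * (x' * x⁻¹) := by
          have h12 : u * x = u' * x' := by rw [← hgux, ← hgux']
          calc u = u * x * x⁻¹ := by rw [mul_assoc, mul_inv_cancel, mul_one]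
            _ = u' * x' * x⁻¹ := by rw [h12]
            _ = u' * (x' * x⁻¹) := by rw [mul_assoc]
        have hDu : DiagT zb (u : Module.End R Mb) :=
          mixed_diagT zb (hup u hu) (hlow u' hu') hDd (by rw [huu, Units.val_mul])
        have hu1 : u = 1 := strictT_diagT_eq_one u (hup u hu) hDu
        rw [hgux, hu1, one_mul]
        exact hx
      · exact le_inf (le_sup_right) (le_sup_right)
    have hHN : Hgroup ebS fbS ≤ Ngroup ebS fbS := hgroup_le_ngroup hAct
    -- common core for parts 7 and 8
    have core : ∀ (U : Subgroup (Module.End R Mb)ˣ) (φ : P.Ψ → ℚ),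
        (∀ g ∈ U ⊔ Hgroup ebS fbS, ∃ v ∈ U, ∃ x ∈ Hgroup ebS fbS, g = v * x) →
        (∀ u ∈ U, StrictT zb φ ((u : Module.End R Mb) - 1)) →
        (U ⊔ Hgroup ebS fbS) ⊓ Ngroup ebS fbS = Hgroup ebS fbS := by
      intro U φ hdec hstr
      apply le_antisymm
      · intro g hg
        rw [Subgroup.mem_inf] at hg
        obtain ⟨hg1, hgN⟩ := hg
        obtain ⟨u, hu, x, hx, hgux⟩ := hdec g hg1
        have hupu := hstr u hu
        have hdx := hdiagH x hx
        have hmono := ngroup_monoT hAct g hgN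
        have hDg : DiagT zb (g : Module.End R Mb) := by
          intro μ ν hne
          obtain ⟨ν₀, cu, hcu⟩ := hmono μ
          by_cases h0 : ν₀ = μ
          · subst h0
            unfold ent
            rw [hcu, map_smul, Module.Basis.repr_self, Finsupp.smul_apply, Finsupp.single_apply,
              if_neg (fun hc : ν₀ = ν => hne (hc ▸ rfl)), smul_zero]
          · exfalso
            have hDiagEntry : ent zb (g : Module.End R Mb) μ μ
                = ent zb (x : Module.End R Mb) μ μ := by
              have hcoe : (g : Module.End R Mb)
                  = (u : Module.End R Mb) * (x : Module.End R Mb) := by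
                rw [hgux, Units.val_mul]
              rw [hcoe, ent_mul, Finset.sum_eq_single μ]
              · have h1 : ent zb (u : Module.End R Mb) μ μ = 1 := by
                  have h2 := hupu μ μ (le_refl _)
                  rw [ent_sub, ent_one, if_pos rfl] at h2
                  linear_combination h2
                rw [h1, mul_one]
              · intro ρ _ hρ
                rw [hdx μ ρ hρ, zero_mul]
              · intro hn; exact absurd (Finset.mem_univ μ) hn
            have hzero : ent zb (g : Module.End R Mb) μ μ = 0 := by
              unfold ent
              rw [hcu, map_smul, Module.Basis.repr_self, Finsupp.smul_apply, Finsupp.single_apply,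
                if_neg h0, smul_zero]
            obtain ⟨a, hax⟩ := diagT_entry_unit x hdx μ
            rw [hDiagEntry] at hzero
            rw [hzero, zero_mul] at hax
            exact one_ne_zero hax.symm
        have hDu : DiagT zb (u : Module.End R Mb) := by
          have hux : u = g * x⁻¹ := by
            rw [hgux, mul_assoc, mul_inv_cancel, mul_one]
          have hcoe : (u : Module.End R Mb) = (g : Module.End R Mb) *
              ((x⁻¹ : (Module.End R Mb)ˣ) : Module.End R Mb) := by
            rw [hux, Units.val_mul]
          rw [hcoe]
          exact diagT_mul hDg (diagT_inv x hdx)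
        have hu1 : u = 1 := strictT_diagT_eq_one u hupu hDu
        rw [hgux, hu1, one_mul]
        exact hx
      · exact le_inf le_sup_right hHN
    exact ⟨part1, part2, part3, part4, part5, part6,
      core (Uplus c eb) _ part4 hup, core (Uminus c eb) _ part5 hlow⟩
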